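/- Let P be a finite nonempty collection of cells and let [a,b] and [α,β] be inner intervals of P with a=(i,j), b=(k,l), c=(i,l), d=(k,j), whose anti-diagonal corners γ,δ satisfy γ=c and δ=(m,n)∈]a,b[ (so α=(i,n) and β=(m,l)); set h=(m,j) and r=(k,n), so that [h,r] is the inner interval with anti-diagonal corners d and δ. Let <^P be a P-order such that gcd(in(f_{a,b}), in(f_{α,β}))≠1. Then S(f_{a,b},f_{α,β}) reduces to 0 modulo G with respect to <^P_lex if and only if one of the following holds: (1) x_d x_α x_β <^P_lex x_δ x_a x_b, and either both h <^P a and α <^P a, or both h <^P δ and α <^P δ; (2) x_d x_α x_β <^P_lex x_δ x_a x_b, and either both r <^P δ and β <^P δ, or both r <^P b and β <^P b; (3) x_δ x_a x_b <^P_lex x_d x_α x_β, and either both r <^P α and a <^P α, or both r <^P d and a <^P d; (4) x_δ x_a x_b <^P_lex x_d x_α x_β, and either both h <^P d and b <^P d, or both h <^P β and b <^P β. -/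

import Mathlib

namespace ClosedPathPaper

open MvPolynomial

/-- Lattice points of `ℤ²`; a cell is identified with its lower left corner. -/
abbrev Pt : Type := ℤ × ℤ

/-- The four vertices (corners) of the unit cell with lower left corner `a`. -/
def cellVerts (a : Pt) : Set Pt :=
  {a, (a.1 + 1, a.2), (a.1, a.2 + 1), (a.1 + 1, a.2 + 1)}

/-- The vertex set `V(P)` of a collection of cells `P`. -/
def VP (P : Finset Pt) : Set Pt := ⋃ a ∈ P, cellVerts a

/-- `[a,b]` is a proper interval and every cell contained in it belongs to `P`. -/
def IsInnerInterval (P : Finset Pt) (a b : Pt) : Prop :=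
  a.1 < b.1 ∧ a.2 < b.2 ∧
    ∀ c : Pt, a.1 ≤ c.1 → c.1 < b.1 → a.2 ≤ c.2 → c.2 < b.2 → c ∈ P

/-- The four corners of the proper interval `[a,b]`:
diagonal corners `a, b` and anti-diagonal corners `c = (a.1, b.2)`, `d = (b.1, a.2)`. -/
def cornersOf (a b : Pt) : Finset Pt := {a, b, (a.1, b.2), (b.1, a.2)}

/-- The inner 2-minor `f_{a,b} = x_a x_b - x_c x_d` attached to the inner interval `[a,b]`. -/
noncomputable def innerMinor (K : Type*) [Field K] (a b : Pt) : MvPolynomial Pt K :=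
  X a * X b - X (a.1, b.2) * X (b.1, a.2)

/-- The set `G` of all inner 2-minors of `P`. -/
def minorsSet (K : Type*) [Field K] (P : Finset Pt) : Set (MvPolynomial Pt K) :=
  {f | ∃ a b : Pt, IsInnerInterval P a b ∧ f = innerMinor K a b}

/-- The polyomino ideal `I_P`. -/
noncomputable def polyoIdeal (K : Type*) [Field K] (P : Finset Pt) :
    Ideal (MvPolynomial Pt K) :=
  Ideal.span (minorsSet K P)

/-! ### Monomial orders -/

/-- Strict lexicographic comparison of exponent vectors induced by the
(strict total) order `po` on the variables. -/
def lexLt (po : Pt → Pt → Prop) (u v : Pt →₀ ℕ) : Prop :=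
  ∃ w : Pt, u w < v w ∧ ∀ w' : Pt, po w w' → u w' = v w'

def lexLe (po : Pt → Pt → Prop) (u v : Pt →₀ ℕ) : Prop := u = v ∨ lexLt po u v

/-- `m` is the leading monomial of `f` with respect to the lexicographic order
induced by `po`. -/
def IsLM {K : Type*} [Field K] (po : Pt → Pt → Prop) (f : MvPolynomial Pt K)
    (m : Pt →₀ ℕ) : Prop :=
  m ∈ f.support ∧ ∀ m' ∈ f.support, lexLe po m' m

/-- `sp` is the S-polynomial of `f` and `g` with respect to the lexicographic
order induced by `po`. -/
def IsSPoly {K : Type*} [Field K] (po : Pt → Pt → Prop) (f g sp : MvPolynomial Pt K) : Prop :=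
  ∃ mf mg : Pt →₀ ℕ, IsLM po f mf ∧ IsLM po g mg ∧
    sp = monomial (mf ⊔ mg - mf) (f.coeff mf)⁻¹ * f
       - monomial (mf ⊔ mg - mg) (g.coeff mg)⁻¹ * g

/-- `h` has a standard expression with respect to `G`, i.e. `h` reduces to `0`
modulo `G` with respect to the lexicographic order induced by `po`. -/
def ReducesToZero {K : Type*} [Field K] (po : Pt → Pt → Prop)
    (G : Set (MvPolynomial Pt K)) (h : MvPolynomial Pt K) : Prop :=
  ∃ (F : Finset (MvPolynomial Pt K)) (q : MvPolynomial Pt K → MvPolynomial Pt K),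
    ↑F ⊆ G ∧ h = ∑ g ∈ F, q g * g ∧
    ∀ g ∈ F, ∀ m, IsLM po (q g * g) m → ∃ mh, IsLM po h mh ∧ lexLe po m mh

/-- The exponent vector of `x_u x_v x_w`. -/
noncomputable def mono3 (u v w : Pt) : Pt →₀ ℕ :=
  Finsupp.single u 1 + Finsupp.single v 1 + Finsupp.single w 1

/-- The leading monomials, viewed as polynomials, of the members of `G`. -/
def leadingMonomials {K : Type*} [Field K] (po : Pt → Pt → Prop)
    (G : Set (MvPolynomial Pt K)) : Set (MvPolynomial Pt K) :=
  {f | ∃ g ∈ G, ∃ m, IsLM po g m ∧ f = monomial m (1 : K)}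

/-- The initial ideal of `I` with respect to the lexicographic order induced by `po`. -/
noncomputable def initialIdeal {K : Type*} [Field K] (po : Pt → Pt → Prop)
    (I : Ideal (MvPolynomial Pt K)) : Ideal (MvPolynomial Pt K) :=
  Ideal.span (leadingMonomials po (I : Set (MvPolynomial Pt K)))

/-- `G` is a Gröbner basis of `I`. -/
def IsGroebnerBasis {K : Type*} [Field K] (po : Pt → Pt → Prop)
    (G : Set (MvPolynomial Pt K)) (I : Ideal (MvPolynomial Pt K)) : Prop :=
  Ideal.span G = I ∧ Ideal.span (leadingMonomials po G) = initialIdeal po I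

/-- `G` is the reduced Gröbner basis of `I` (up to normalizing signs). -/
def IsReducedGroebnerBasis {K : Type*} [Field K] (po : Pt → Pt → Prop)
    (G : Set (MvPolynomial Pt K)) (I : Ideal (MvPolynomial Pt K)) : Prop :=
  IsGroebnerBasis po G I ∧
  (∀ g ∈ G, ∃ m, IsLM po g m ∧ (g.coeff m = 1 ∨ g.coeff m = -1)) ∧
  (∀ g ∈ G, ∀ g' ∈ G, g' ≠ g → ∀ m ∈ g.support, ∀ m', IsLM po g' m' → ¬ m' ≤ m)

/-! ### Closed paths and special configurations -/

/-- Two cells share a common edge. -/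
def cellAdj (a b : Pt) : Prop :=
  b = (a.1 + 1, a.2) ∨ b = (a.1 - 1, a.2) ∨ b = (a.1, a.2 + 1) ∨ b = (a.1, a.2 - 1)

/-- `P` is a closed path polyomino. -/
def IsClosedPath (P : Finset Pt) : Prop :=
  ∃ n : ℕ, 5 < n ∧ ∃ A : ZMod n → Pt,
    Function.Injective A ∧
    (∀ i, cellAdj (A i) (A (i + 1))) ∧
    (∀ i j : ZMod n, j ≠ i - 2 → j ≠ i - 1 → j ≠ i → j ≠ i + 1 → j ≠ i + 2 →
      cellVerts (A i) ∩ cellVerts (A j) = ∅) ∧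
    ∀ c : Pt, c ∈ P ↔ ∃ i, A i = c

/-- The horizontal block of rank `m` whose leftmost cell is `a`. -/
def hBlockCells (a : Pt) (m : ℕ) : Finset Pt :=
  (Finset.range m).image fun t : ℕ => (a.1 + (t : ℤ), a.2)

/-- The vertical block of rank `m` whose bottom cell is `a`. -/
def vBlockCells (a : Pt) (m : ℕ) : Finset Pt :=
  (Finset.range m).image fun t : ℕ => (a.1, a.2 + (t : ℤ))

/-- The vertex set of a finite set of cells. -/
def vertsOfCells (s : Finset Pt) : Set Pt := ⋃ c ∈ s, cellVerts c

/-- A W-pentomino of `P`: a horizontal block of rank two with leftmost cell `a₁`, a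
vertical block of rank two with bottom cell `a₂`, and a middle cell `A` not belonging to the
two blocks, such that the vertex sets of the two blocks meet exactly in the lower right
corner of `A`. -/
def IsWPentomino (P : Finset Pt) (a₁ a₂ A : Pt) : Prop :=
  hBlockCells a₁ 2 ⊆ P ∧ vBlockCells a₂ 2 ⊆ P ∧ A ∈ P ∧
  A ∉ hBlockCells a₁ 2 ∪ vBlockCells a₂ 2 ∧
  vertsOfCells (hBlockCells a₁ 2) ∩ vertsOfCells (vBlockCells a₂ 2) = {(A.1 + 1, A.2)}

/-- An RW-heptomino of `P`: a horizontal block of rank three with leftmost cell `a₁`, a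
vertical block of rank three with bottom cell `a₂`, and a middle cell `A` not belonging to
the two blocks, such that the vertex sets of the two blocks meet exactly in the upper left
corner of `A`. -/
def IsRWHeptomino (P : Finset Pt) (a₁ a₂ A : Pt) : Prop :=
  hBlockCells a₁ 3 ⊆ P ∧ vBlockCells a₂ 3 ⊆ P ∧ A ∈ P ∧
  A ∉ hBlockCells a₁ 3 ∪ vBlockCells a₂ 3 ∧
  vertsOfCells (hBlockCells a₁ 3) ∩ vertsOfCells (vBlockCells a₂ 3) = {(A.1, A.2 + 1)}

/-- An LD-horizontal skew tetromino of `P` (base point `p`): the cells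
`p, p+(1,0), p+(1,1), p+(2,1)`. -/
def IsLDhTetromino (P : Finset Pt) (p : Pt) : Prop :=
  p ∈ P ∧ (p.1 + 1, p.2) ∈ P ∧ (p.1 + 1, p.2 + 1) ∈ P ∧ (p.1 + 2, p.2 + 1) ∈ P

/-- An LD-vertical skew tetromino of `P` (base point `p`): the cells
`p, p+(0,1), p+(1,1), p+(1,2)`. -/
def IsLDvTetromino (P : Finset Pt) (p : Pt) : Prop :=
  p ∈ P ∧ (p.1, p.2 + 1) ∈ P ∧ (p.1 + 1, p.2 + 1) ∈ P ∧ (p.1 + 1, p.2 + 2) ∈ P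

/-- An LD-horizontal skew hexomino of `P` (base point `p`): the cells
`p, p+(1,0), p+(2,0), p+(2,1), p+(3,1), p+(4,1)`. -/
def IsLDhHexomino (P : Finset Pt) (p : Pt) : Prop :=
  p ∈ P ∧ (p.1 + 1, p.2) ∈ P ∧ (p.1 + 2, p.2) ∈ P ∧
  (p.1 + 2, p.2 + 1) ∈ P ∧ (p.1 + 3, p.2 + 1) ∈ P ∧ (p.1 + 4, p.2 + 1) ∈ P

/-- An LD-vertical skew hexomino of `P` (base point `p`): the cells
`p, p+(0,1), p+(0,2), p+(1,2), p+(1,3), p+(1,4)`. -/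
def IsLDvHexomino (P : Finset Pt) (p : Pt) : Prop :=
  p ∈ P ∧ (p.1, p.2 + 1) ∈ P ∧ (p.1, p.2 + 2) ∈ P ∧
  (p.1 + 1, p.2 + 2) ∈ P ∧ (p.1 + 1, p.2 + 3) ∈ P ∧ (p.1 + 1, p.2 + 4) ∈ P

/-- The total order `<¹` on `ℤ²`. -/
def lt1 (a b : Pt) : Prop := a.1 < b.1 ∨ (a.1 = b.1 ∧ a.2 < b.2)

/-- The P-order `<^Y` attached to a set `Y` of vertices. -/
def Ylt (Y : Set Pt) (a b : Pt) : Prop :=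
  (a ∉ Y ∧ b ∈ Y) ∨ (a ∉ Y ∧ b ∉ Y ∧ lt1 a b) ∨ (a ∈ Y ∧ b ∈ Y ∧ lt1 a b)


section Aux

variable {po : Pt → Pt → Prop}

/-- existence of a maximum of a nonempty finite set w.r.t. a transitive total relation -/
lemma ex_max {X : Type*} (R : X → X → Prop)
    (htr : ∀ x y z : X, R x y → R y z → R x z)
    (htot : ∀ x y : X, x ≠ y → R x y ∨ R y x) :
    ∀ s : Finset X, s.Nonempty → ∃ m ∈ s, ∀ x ∈ s, x = m ∨ R x m := by
  classical
  intro s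
  induction s using Finset.induction with
  | empty => intro h; simp at h
  | insert a s hnot ih =>
    intro _
    by_cases hs : s.Nonempty
    · obtain ⟨m, hm, hmax⟩ := ih hs
      have hne : a ≠ m := fun h => hnot (h ▸ hm)
      rcases htot a m hne with h | h
      · exact ⟨m, Finset.mem_insert_of_mem hm, by
          intro x hx
          rcases Finset.mem_insert.mp hx with rfl | hx
          · exact Or.inr h
          · exact hmax x hx⟩
      · refine ⟨a, Finset.mem_insert_self a s, ?_⟩
        intro x hx
        rcases Finset.mem_insert.mp hx with rfl | hx
        · exact Or.inl rfl
        · rcases hmax x hx with rfl | hR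
          · exact Or.inr h
          · exact Or.inr (htr _ _ _ hR h)
    · have : s = ∅ := Finset.not_nonempty_iff_eq_empty.mp hs
      subst this
      exact ⟨a, by simp, by simp⟩

section po
variable (hirr : ∀ x : Pt, ¬ po x x)
  (htr : ∀ x y z : Pt, po x y → po y z → po x z)
  (htot : ∀ x y : Pt, x ≠ y → po x y ∨ po y x)

include hirr htr in
lemma po_asymm {x y : Pt} (h : po x y) : ¬ po y x := fun h' => hirr x (htr _ _ _ h h')

lemma lexLt_irrefl (u : Pt →₀ ℕ) : ¬ lexLt po u u := by
  rintro ⟨w, hw, -⟩; omega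

include hirr htr htot in
lemma lexLt_asymm {u v : Pt →₀ ℕ} (h : lexLt po u v) : ¬ lexLt po v u := by
  rintro ⟨w2, hw2, ha2⟩
  obtain ⟨w1, hw1, ha1⟩ := h
  rcases htot w1 w2 (fun h => by subst h; omega) with h | h
  · have := ha1 w2 h; omega
  · have := ha2 w1 h; omega

include htr htot in
lemma lexLt_trans {u v x : Pt →₀ ℕ} (h1 : lexLt po u v) (h2 : lexLt po v x) :
    lexLt po u x := by
  obtain ⟨w1, hw1, ha1⟩ := h1
  obtain ⟨w2, hw2, ha2⟩ := h2
  by_cases he : w1 = w2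
  · subst he
    exact ⟨w1, by omega, fun w' hw' => (ha1 w' hw').trans (ha2 w' hw')⟩
  rcases htot w1 w2 he with h | h
  · exact ⟨w2, by have := ha1 w2 h; omega,
      fun w' hw' => (ha1 w' (htr _ _ _ h hw')).trans (ha2 w' hw')⟩
  · exact ⟨w1, by have := ha2 w1 h; omega,
      fun w' hw' => (ha1 w' hw').trans (ha2 w' (htr _ _ _ h hw'))⟩

include hirr htr htot in
lemma lexLt_total {u v : Pt →₀ ℕ} (h : u ≠ v) : lexLt po u v ∨ lexLt po v u := by
  classical
  have hD : ∃ w, u w ≠ v w := by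
    by_contra hc
    push_neg at hc
    exact h (Finsupp.ext hc)
  set D : Finset Pt := (u.support ∪ v.support).filter (fun w => u w ≠ v w) with hDdef
  have hmem : ∀ w, u w ≠ v w → w ∈ D := by
    intro w hw
    have : w ∈ u.support ∪ v.support := by
      rcases Nat.lt_or_ge 0 (u w) with h0 | h0
      · exact Finset.mem_union_left _ (Finsupp.mem_support_iff.mpr (by omega))
      · have : u w = 0 := by omega
        exact Finset.mem_union_right _ (Finsupp.mem_support_iff.mpr (by omega))
    exact Finset.mem_filter.mpr ⟨this, hw⟩
  obtain ⟨w0, hw0⟩ := hD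
  obtain ⟨m, hmD, hmax⟩ := ex_max po htr htot D ⟨w0, hmem w0 hw0⟩
  have hmne : u m ≠ v m := (Finset.mem_filter.mp hmD).2
  have habove : ∀ w', po m w' → u w' = v w' := by
    intro w' hw'
    by_contra hne
    rcases hmax w' (hmem w' hne) with rfl | hR
    · exact hirr w' hw'
    · exact hirr m (htr _ _ _ hw' hR)
  rcases Nat.lt_or_ge (u m) (v m) with h | h
  · exact Or.inl ⟨m, h, habove⟩
  · exact Or.inr ⟨m, by omega, fun w' hw' => (habove w' hw').symm⟩

lemma lexLt_add_right {u v w : Pt →₀ ℕ} :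
    lexLt po (u + w) (v + w) ↔ lexLt po u v := by
  constructor
  · rintro ⟨p, hp, ha⟩
    refine ⟨p, by simpa using hp, fun w' hw' => ?_⟩
    have := ha w' hw'
    simp only [Finsupp.add_apply] at this
    omega
  · rintro ⟨p, hp, ha⟩
    refine ⟨p, by simpa using hp, fun w' hw' => ?_⟩
    have := ha w' hw'
    simp only [Finsupp.add_apply]
    omega

lemma lexLt_add_left {u v w : Pt →₀ ℕ} :
    lexLt po (w + u) (w + v) ↔ lexLt po u v := by
  rw [add_comm w u, add_comm w v]; exact lexLt_add_right

include hirr htr htot in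
lemma lexLe_antisymm {u v : Pt →₀ ℕ} (h1 : lexLe po u v) (h2 : lexLe po v u) : u = v := by
  rcases h1 with rfl | h1
  · rfl
  rcases h2 with rfl | h2
  · rfl
  exact absurd h2 (lexLt_asymm hirr htr htot h1)

include htr htot in
lemma lexLe_trans {u v x : Pt →₀ ℕ} (h1 : lexLe po u v) (h2 : lexLe po v x) :
    lexLe po u x := by
  rcases h1 with rfl | h1
  · exact h2
  rcases h2 with rfl | h2
  · exact Or.inr h1
  exact Or.inr (lexLt_trans htr htot h1 h2)

include htr htot in
lemma lexLt_of_lt_of_le {u v x : Pt →₀ ℕ} (h1 : lexLt po u v) (h2 : lexLe po v x) :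
    lexLt po u x := by
  rcases h2 with rfl | h2
  · exact h1
  exact lexLt_trans htr htot h1 h2

include htr htot in
lemma lexLe_add {u v u' v' : Pt →₀ ℕ} (h1 : lexLe po u v) (h2 : lexLe po u' v') :
    lexLe po (u + u') (v + v') := by
  have s1 : lexLe po (u + u') (v + u') := by
    rcases h1 with rfl | h1
    · exact Or.inl rfl
    · exact Or.inr (lexLt_add_right.mpr h1)
  have s2 : lexLe po (v + u') (v + v') := by
    rcases h2 with rfl | h2
    · exact Or.inl rfl
    · exact Or.inr (lexLt_add_left.mpr h2)
  exact lexLe_trans htr htot s1 s2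

end po
end Aux
section Aux2
set_option linter.unusedSectionVars false

variable {po : Pt → Pt → Prop}

noncomputable def mono2 (u v : Pt) : Pt →₀ ℕ :=
  Finsupp.single u 1 + Finsupp.single v 1

lemma mono2_apply (u v w : Pt) :
    mono2 u v w = (if u = w then 1 else 0) + (if v = w then 1 else 0) := by
  simp [mono2, Finsupp.single_apply]

lemma mono3_eq (u v w : Pt) : mono3 u v w = mono2 u v + Finsupp.single w 1 := rfl

lemma mono3_apply (u v w p : Pt) :
    mono3 u v w p = (if u = p then 1 else 0) + ((if v = p then 1 else 0)
      + (if w = p then 1 else 0)) := by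
  simp [mono3, Finsupp.single_apply]; ring

lemma mono2_comm (u v : Pt) : mono2 u v = mono2 v u := add_comm _ _

variable (hirr : ∀ x : Pt, ¬ po x x)
  (htr : ∀ x y z : Pt, po x y → po y z → po x z)
  (htot : ∀ x y : Pt, x ≠ y → po x y ∨ po y x)

include hirr htr htot in
lemma pair_lt_of_max {p1 p2 q1 q2 : Pt} (hq : q1 ≠ q2)
    (h11 : p1 ≠ q1) (h12 : p1 ≠ q2) (h21 : p2 ≠ q1) (h22 : p2 ≠ q2)
    (h1 : po p1 q1) (h2 : po p2 q1) :
    lexLt po (mono2 p1 p2) (mono2 q1 q2) := by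
  rcases htot q1 q2 hq with h | h
  · -- q2 is the max
    refine ⟨q2, ?_, ?_⟩
    · rw [mono2_apply, mono2_apply, if_neg h12, if_neg h22]
      simp [hq]
    · intro w' hw'
      rw [mono2_apply, mono2_apply]
      have n1 : p1 ≠ w' := fun e => hirr q2 (htr _ _ _ hw' (e ▸ htr _ _ _ h1 h))
      have n2 : p2 ≠ w' := fun e => hirr q2 (htr _ _ _ hw' (e ▸ htr _ _ _ h2 h))
      have n3 : q1 ≠ w' := fun e => hirr q2 (htr _ _ _ hw' (e ▸ h))
      have n4 : q2 ≠ w' := fun e => hirr q2 (e ▸ hw')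
      simp [n1, n2, n3, n4]
  · -- q1 is the max
    refine ⟨q1, ?_, ?_⟩
    · rw [mono2_apply, mono2_apply, if_neg h11, if_neg h21, if_pos rfl]
      simp
    · intro w' hw'
      rw [mono2_apply, mono2_apply]
      have n1 : p1 ≠ w' := fun e => hirr q1 (htr _ _ _ hw' (e ▸ h1))
      have n2 : p2 ≠ w' := fun e => hirr q1 (htr _ _ _ hw' (e ▸ h2))
      have n3 : q2 ≠ w' := fun e => hirr q1 (htr _ _ _ hw' (e ▸ h))
      have n4 : q1 ≠ w' := fun e => hirr q1 (e ▸ hw')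
      simp [n1, n2, n3, n4]

include hirr htr htot in
lemma pair_lt_iff {p1 p2 q1 q2 : Pt} (hp : p1 ≠ p2) (hq : q1 ≠ q2)
    (h11 : p1 ≠ q1) (h12 : p1 ≠ q2) (h21 : p2 ≠ q1) (h22 : p2 ≠ q2) :
    lexLt po (mono2 p1 p2) (mono2 q1 q2) ↔
      (po p1 q1 ∧ po p2 q1) ∨ (po p1 q2 ∧ po p2 q2) := by
  constructor
  · rintro ⟨w, hw, ha⟩
    rw [mono2_apply, mono2_apply] at hw
    have hwq : q1 = w ∨ q2 = w := by
      by_contra hc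
      push_neg at hc
      rw [if_neg hc.1, if_neg hc.2] at hw
      omega
    have key : ∀ x : Pt, x ≠ w → (x = p1 ∨ x = p2 ∨ x = q1 ∨ x = q2) → po x w := by
      intro x hx hmem
      rcases htot x w hx with h | h
      · exact h
      · exfalso
        have hval := ha x h
        rw [mono2_apply, mono2_apply] at hval
        rcases hmem with rfl | rfl | rfl | rfl
        · rw [if_pos rfl, if_neg (Ne.symm hp), if_neg (Ne.symm h11),
            if_neg (Ne.symm h12)] at hval
          omega
        · rw [if_neg hp, if_pos rfl, if_neg (Ne.symm h21),
            if_neg (Ne.symm h22)] at hval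
          omega
        · rw [if_neg h11, if_neg h21, if_pos rfl, if_neg (Ne.symm hq)] at hval
          omega
        · rw [if_neg h12, if_neg h22, if_neg hq, if_pos rfl] at hval
          omega
    rcases hwq with rfl | rfl
    · exact Or.inl ⟨key p1 h11 (Or.inl rfl), key p2 h21 (Or.inr (Or.inl rfl))⟩
    · exact Or.inr ⟨key p1 h12 (Or.inl rfl), key p2 h22 (Or.inr (Or.inl rfl))⟩
  · rintro (⟨h1, h2⟩ | ⟨h1, h2⟩)
    · exact pair_lt_of_max hirr htr htot hq h11 h12 h21 h22 h1 h2
    · rw [mono2_comm q1 q2]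
      exact pair_lt_of_max hirr htr htot (Ne.symm hq) h12 h11 h22 h21 h1 h2

end Aux2
section Aux3
set_option linter.unusedSectionVars false

variable {po : Pt → Pt → Prop} {K : Type*} [Field K]

lemma coeff_binom (e1 e2 e : Pt →₀ ℕ) (c1 c2 : K) :
    MvPolynomial.coeff e
      (MvPolynomial.monomial e1 c1 + MvPolynomial.monomial e2 c2) =
      (if e1 = e then c1 else 0) + (if e2 = e then c2 else 0) := by
  simp [MvPolynomial.coeff_add, MvPolynomial.coeff_monomial]

lemma support_binom {e1 e2 : Pt →₀ ℕ} {c1 c2 : K} (h : e1 ≠ e2)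
    (hc1 : c1 ≠ 0) (hc2 : c2 ≠ 0) :
    (MvPolynomial.monomial e1 c1 + MvPolynomial.monomial e2 c2).support = {e1, e2} := by
  ext e
  rw [MvPolynomial.mem_support_iff, coeff_binom]
  constructor
  · intro hne
    by_contra hc
    simp only [Finset.mem_insert, Finset.mem_singleton] at hc
    push_neg at hc
    rw [if_neg (fun he => hc.1 he.symm), if_neg (fun he => hc.2 he.symm)] at hne
    simp at hne
  · intro he
    simp only [Finset.mem_insert, Finset.mem_singleton] at he
    rcases he with rfl | rfl
    · rw [if_pos rfl, if_neg (fun he => h he.symm)]; simpa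
    · rw [if_neg h, if_pos rfl]; simpa

lemma innerMinor_eq (u v : Pt) :
    innerMinor K u v = MvPolynomial.monomial (mono2 u v) 1 +
      MvPolynomial.monomial (mono2 (u.1, v.2) (v.1, u.2)) (-1) := by
  unfold innerMinor
  have hX : ∀ p q : Pt, (MvPolynomial.X p * MvPolynomial.X q : MvPolynomial Pt K)
      = MvPolynomial.monomial (mono2 p q) 1 := by
    intro p q
    rw [show (MvPolynomial.X p : MvPolynomial Pt K)
        = MvPolynomial.monomial (Finsupp.single p 1) 1 from rfl,
      show (MvPolynomial.X q : MvPolynomial Pt K)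
        = MvPolynomial.monomial (Finsupp.single q 1) 1 from rfl,
      MvPolynomial.monomial_mul]
    norm_num [mono2]
  rw [hX, hX, sub_eq_add_neg]
  congr 1
  rw [← map_neg]

lemma X_mul_X_mul_X (u v w : Pt) :
    (MvPolynomial.X u * MvPolynomial.X v * MvPolynomial.X w : MvPolynomial Pt K)
      = MvPolynomial.monomial (mono3 u v w) 1 := by
  rw [show (MvPolynomial.X u : MvPolynomial Pt K)
      = MvPolynomial.monomial (Finsupp.single u 1) 1 from rfl,
    show (MvPolynomial.X v : MvPolynomial Pt K)
      = MvPolynomial.monomial (Finsupp.single v 1) 1 from rfl,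
    show (MvPolynomial.X w : MvPolynomial Pt K)
      = MvPolynomial.monomial (Finsupp.single w 1) 1 from rfl,
    MvPolynomial.monomial_mul, MvPolynomial.monomial_mul]
  norm_num [mono3]

variable (hirr : ∀ x : Pt, ¬ po x x)
  (htr : ∀ x y z : Pt, po x y → po y z → po x z)
  (htot : ∀ x y : Pt, x ≠ y → po x y ∨ po y x)

include hirr htr htot in
lemma isLM_unique {f : MvPolynomial Pt K} {m m' : Pt →₀ ℕ}
    (h : IsLM po f m) (h' : IsLM po f m') : m = m' :=
  lexLe_antisymm hirr htr htot (h'.2 m h.1) (h.2 m' h'.1)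

include hirr htr htot in
lemma exists_isLM {f : MvPolynomial Pt K} (hf : f ≠ 0) : ∃ m, IsLM po f m := by
  obtain ⟨m, hm, hmax⟩ := ex_max (lexLt po) (fun u v w h1 h2 => lexLt_trans htr htot h1 h2)
    (fun u v h => lexLt_total hirr htr htot h) f.support
    (by simpa [MvPolynomial.support_nonempty] using hf)
  exact ⟨m, hm, fun m' hm' => hmax m' hm'⟩

include hirr htr htot in
lemma isLM_binom_iff {e1 e2 : Pt →₀ ℕ} {c1 c2 : K} (h : e1 ≠ e2)
    (hc1 : c1 ≠ 0) (hc2 : c2 ≠ 0) (m : Pt →₀ ℕ) :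
    IsLM po (MvPolynomial.monomial e1 c1 + MvPolynomial.monomial e2 c2) m ↔
      (m = e1 ∧ lexLt po e2 e1) ∨ (m = e2 ∧ lexLt po e1 e2) := by
  constructor
  · rintro ⟨hm, hmax⟩
    rw [support_binom h hc1 hc2] at hm
    simp only [Finset.mem_insert, Finset.mem_singleton] at hm
    rcases hm with rfl | rfl
    · refine Or.inl ⟨rfl, ?_⟩
      have := hmax e2 (by rw [support_binom h hc1 hc2]; simp)
      rcases this with he | hlt
      · exact absurd he.symm h
      · exact hlt
    · refine Or.inr ⟨rfl, ?_⟩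
      have := hmax e1 (by rw [support_binom h hc1 hc2]; simp)
      rcases this with he | hlt
      · exact absurd he h
      · exact hlt
  · rintro (⟨rfl, hlt⟩ | ⟨rfl, hlt⟩) <;>
      refine ⟨by rw [support_binom h hc1 hc2]; simp, ?_⟩ <;>
      intro m' hm' <;> rw [support_binom h hc1 hc2] at hm' <;>
      simp only [Finset.mem_insert, Finset.mem_singleton] at hm' <;>
      rcases hm' with rfl | rfl
    · exact Or.inl rfl
    · exact Or.inr hlt
    · exact Or.inr hlt
    · exact Or.inl rfl

include hirr htr htot in
lemma isLM_mul {f g : MvPolynomial Pt K} {mf mg : Pt →₀ ℕ}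
    (hf : IsLM po f mf) (hg : IsLM po g mg) : IsLM po (f * g) (mf + mg) := by
  constructor
  · rw [MvPolynomial.mem_support_iff, MvPolynomial.coeff_mul]
    rw [Finset.sum_eq_single ((mf, mg) : (Pt →₀ ℕ) × (Pt →₀ ℕ))]
    · exact mul_ne_zero (MvPolynomial.mem_support_iff.mp hf.1)
        (MvPolynomial.mem_support_iff.mp hg.1)
    · intro q hq hne
      rw [Finset.HasAntidiagonal.mem_antidiagonal] at hq
      by_cases h1 : MvPolynomial.coeff q.1 f = 0
      · simp [h1]
      by_cases h2 : MvPolynomial.coeff q.2 g = 0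
      · simp [h2]
      exfalso
      have hle1 : lexLe po q.1 mf := hf.2 q.1 (MvPolynomial.mem_support_iff.mpr h1)
      have hle2 : lexLe po q.2 mg := hg.2 q.2 (MvPolynomial.mem_support_iff.mpr h2)
      have hlt : lexLt po (q.1 + q.2) (mf + mg) := by
        rcases hle1 with he1 | hlt1
        · rcases hle2 with he2 | hlt2
          · exact absurd (Prod.ext he1 he2) hne
          · rw [he1]; exact lexLt_add_left.mpr hlt2
        · exact lexLt_of_lt_of_le htr htot (lexLt_add_right.mpr hlt1)
            (lexLe_add htr htot (Or.inl rfl) hle2)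
      rw [hq] at hlt
      exact lexLt_irrefl _ hlt
    · intro hn
      exfalso
      exact hn (Finset.HasAntidiagonal.mem_antidiagonal.mpr rfl)
  · intro m' hm'
    have hsub := MvPolynomial.support_mul f g hm'
    rw [Finset.mem_add] at hsub
    obtain ⟨s, hs, t, ht, hst⟩ := hsub
    rw [← hst]
    exact lexLe_add htr htot (hf.2 s hs) (hg.2 t ht)

include hirr htr htot in
/-- key necessity step -/
lemma key_step {G : Set (MvPolynomial Pt K)} {sp : MvPolynomial Pt K} {M : Pt →₀ ℕ}
    (hred : ReducesToZero po G sp) (hM : IsLM po sp M) :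
    ∃ g ∈ G, ∃ mg, IsLM po g mg ∧ ∀ p, mg p ≤ M p := by
  obtain ⟨F, q, hsub, heq, hstd⟩ := hred
  have hcoeff : MvPolynomial.coeff M sp ≠ 0 := MvPolynomial.mem_support_iff.mp hM.1
  have : ∃ g ∈ F, MvPolynomial.coeff M (q g * g) ≠ 0 := by
    by_contra hc
    push_neg at hc
    rw [heq, MvPolynomial.coeff_sum] at hcoeff
    exact hcoeff (Finset.sum_eq_zero hc)
  obtain ⟨g, hgF, hgc⟩ := this
  have hqg0 : q g * g ≠ 0 := fun h => hgc (by rw [h]; simp)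
  have hq0 : q g ≠ 0 := fun h => hqg0 (by rw [h]; simp)
  have hg0 : g ≠ 0 := fun h => hqg0 (by rw [h]; simp)
  obtain ⟨mq, hmq⟩ := exists_isLM hirr htr htot (po := po) hq0
  obtain ⟨mg, hmg⟩ := exists_isLM hirr htr htot (po := po) hg0
  have hmul : IsLM po (q g * g) (mq + mg) := isLM_mul hirr htr htot hmq hmg
  obtain ⟨mh, hmh, hle⟩ := hstd g hgF (mq + mg) hmul
  have hMh : mh = M := isLM_unique hirr htr htot hmh hM
  rw [hMh] at hle
  have hge : lexLe po M (mq + mg) :=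
    hmul.2 M (MvPolynomial.mem_support_iff.mpr hgc)
  have hEq : mq + mg = M := lexLe_antisymm hirr htr htot hle hge
  refine ⟨g, hsub hgF, mg, hmg, fun p => ?_⟩
  have := DFunLike.congr_fun hEq p
  simp only [Finsupp.add_apply] at this
  omega

end Aux3
section Aux4
set_option linter.unusedSectionVars false
open MvPolynomial

variable {po : Pt → Pt → Prop} {K : Type*} [Field K]

lemma mono2_ne {u v u' v' : Pt} (hu : u' ≠ u) (hv : v' ≠ u) :
    mono2 u v ≠ mono2 u' v' := by
  intro h
  have := DFunLike.congr_fun h u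
  rw [mono2_apply, mono2_apply, if_pos rfl, if_neg hu, if_neg hv] at this
  omega

lemma mono3_ne {x y z x' y' z' : Pt} (h1 : x' ≠ x) (h2 : y' ≠ x) (h3 : z' ≠ x) :
    mono3 x y z ≠ mono3 x' y' z' := by
  intro h
  have := DFunLike.congr_fun h x
  rw [mono3_apply, mono3_apply, if_pos rfl, if_neg h1, if_neg h2, if_neg h3] at this
  split_ifs at this <;> omega

lemma mono2_pos {u v w : Pt} (h : 0 < mono2 u v w) : w = u ∨ w = v := by
  by_contra hc
  push_neg at hc
  rw [mono2_apply, if_neg (fun e => hc.1 e.symm), if_neg (fun e => hc.2 e.symm)] at h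
  omega

lemma mem_of_mono2_le {u v x y z : Pt} (hle : ∀ p, mono2 u v p ≤ mono3 x y z p) :
    (u = x ∨ u = y ∨ u = z) ∧ (v = x ∨ v = y ∨ v = z) := by
  constructor
  · by_contra hc
    push_neg at hc
    have := hle u
    rw [mono2_apply, mono3_apply, if_pos rfl,
      if_neg (show ¬ x = u from fun e => hc.1 e.symm),
      if_neg (show ¬ y = u from fun e => hc.2.1 e.symm),
      if_neg (show ¬ z = u from fun e => hc.2.2 e.symm)] at this
    split_ifs at this <;> omega
  · by_contra hc
    push_neg at hc
    have := hle v
    rw [mono2_apply, mono3_apply,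
      if_neg (show ¬ x = v from fun e => hc.1 e.symm),
      if_neg (show ¬ y = v from fun e => hc.2.1 e.symm),
      if_neg (show ¬ z = v from fun e => hc.2.2 e.symm),
      if_pos (show v = v from rfl)] at this
    split_ifs at this <;> omega

lemma sup_mono2_mono2 {x y z : Pt} (hxy : x ≠ y) (hxz : x ≠ z) (hyz : y ≠ z) :
    mono2 x y ⊔ mono2 x z = mono3 x y z := by
  ext p
  rw [Finsupp.sup_apply, mono2_apply, mono2_apply, mono3_apply]
  by_cases h1 : x = p
  · subst h1
    simp [Ne.symm hxy, Ne.symm hxz]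
  · by_cases h2 : y = p
    · subst h2
      simp [hxy, Ne.symm hyz]
    · by_cases h3 : z = p
      · subst h3
        simp [hxz, hyz]
      · simp [h1, h2, h3]

lemma mono3_eq' (u v w : Pt) : mono3 u v w = mono2 u w + Finsupp.single v 1 := by
  simp only [mono3, mono2]
  abel

lemma mem_support_binom' {E1 E2 m : Pt →₀ ℕ} {c1 c2 : K}
    (h : m ∈ (monomial E1 c1 + monomial E2 c2).support) : m = E1 ∨ m = E2 := by
  rw [mem_support_iff, coeff_binom] at h
  by_contra hc
  push_neg at hc
  rw [if_neg (fun e => hc.1 e.symm), if_neg (fun e => hc.2 e.symm)] at h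
  simp at h

lemma neg_X_mul_binom (x : Pt) (e1 e2 : Pt →₀ ℕ) :
    (-(X x) : MvPolynomial Pt K) * (monomial e1 1 + monomial e2 (-1))
      = monomial (Finsupp.single x 1 + e1) (-1) + monomial (Finsupp.single x 1 + e2) 1 := by
  rw [show (X x : MvPolynomial Pt K) = monomial (Finsupp.single x 1) 1 from rfl,
    ← map_neg, mul_add, monomial_mul, monomial_mul]
  norm_num

variable (hirr : ∀ x : Pt, ¬ po x x)
  (htr : ∀ x y z : Pt, po x y → po y z → po x z)
  (htot : ∀ x y : Pt, x ≠ y → po x y ∨ po y x)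

include hirr htr htot in
lemma reducesToZero_of_two {G : Set (MvPolynomial Pt K)} {g1 g2 q1 q2 sp : MvPolynomial Pt K}
    {M : Pt →₀ ℕ}
    (hg1 : g1 ∈ G) (hg2 : g2 ∈ G) (hne : g1 ≠ g2)
    (heq : sp = q1 * g1 + q2 * g2) (hM : IsLM po sp M)
    (h1 : ∀ m ∈ (q1 * g1).support, lexLe po m M)
    (h2 : ∀ m ∈ (q2 * g2).support, lexLe po m M) :
    ReducesToZero po G sp := by
  classical
  refine ⟨{g1, g2}, fun g => if g = g1 then q1 else q2, ?_, ?_, ?_⟩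
  · intro g hg
    simp only [Finset.coe_insert, Finset.coe_singleton, Set.mem_insert_iff,
      Set.mem_singleton_iff] at hg
    rcases hg with rfl | rfl
    · exact hg1
    · exact hg2
  · rw [Finset.sum_pair hne]
    beta_reduce
    rw [if_pos rfl, if_neg (Ne.symm hne)]
    exact heq
  · intro g hg m hm
    refine ⟨M, hM, ?_⟩
    simp only [Finset.mem_insert, Finset.mem_singleton] at hg
    beta_reduce at hm
    rcases hg with rfl | rfl
    · rw [if_pos rfl] at hm
      exact h1 m hm.1
    · rw [if_neg (Ne.symm hne)] at hm
      exact h2 m hm.1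

lemma pt_ne {x1 y1 x2 y2 : ℤ} (h : x1 ≠ x2 ∨ y1 ≠ y2) : ((x1, y1) : Pt) ≠ (x2, y2) := by
  simp only [ne_eq, Prod.mk.injEq, not_and]
  rcases h with h | h
  · intro hx; exact absurd hx h
  · intro _; exact h

end Aux4
section MainAux
set_option linter.unusedSectionVars false
set_option maxHeartbeats 1000000
open MvPolynomial

variable {K : Type*} [Field K] {P : Finset Pt} {po : Pt → Pt → Prop}

variable (hirr' : ∀ x : Pt, ¬ po x x)
  (htr' : ∀ x y z : Pt, po x y → po y z → po x z)
  (htot' : ∀ x y : Pt, x ≠ y → po x y ∨ po y x)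

include hirr' htr' htot' in
lemma necT1 {i j k l m n : ℤ}
    (him : i < m) (hmk : m < k) (hjn : j < n) (hnl : n < l)
    (hLM1 : IsLM po (innerMinor K ((i,j):Pt) ((k,l):Pt)) (mono2 (i,l) (k,j)))
    (hcase : lexLt po (mono3 ((k,j):Pt) (i,n) (m,l)) (mono3 ((m,n):Pt) (i,j) (k,l)))
    (hred : ReducesToZero po (minorsSet K P)
      (monomial (mono3 ((k,j):Pt) (i,n) (m,l)) (1:K) +
       monomial (mono3 ((m,n):Pt) (i,j) (k,l)) (-1:K))) :
    (((po ((m,j):Pt) (i,j) ∧ po ((i,n):Pt) (i,j)) ∨ (po ((m,j):Pt) (m,n) ∧ po ((i,n):Pt) (m,n))) ∨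
     ((po ((k,n):Pt) (m,n) ∧ po ((m,l):Pt) (m,n)) ∨ (po ((k,n):Pt) (k,l) ∧ po ((m,l):Pt) (k,l)))) := by
  have negone : (-1 : K) ≠ 0 := neg_ne_zero.mpr one_ne_zero
  have hne0 : mono3 ((k,j):Pt) (i,n) (m,l) ≠ mono3 ((m,n):Pt) (i,j) (k,l) :=
    mono3_ne (pt_ne (by omega)) (pt_ne (by omega)) (pt_ne (by omega))
  have hne1 : mono2 ((i,j):Pt) (k,l) ≠ mono2 (i,l) (k,j) :=
    mono2_ne (pt_ne (by omega)) (pt_ne (by omega))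
  have hLMsp : IsLM po
      (monomial (mono3 ((k,j):Pt) (i,n) (m,l)) (1:K) +
       monomial (mono3 ((m,n):Pt) (i,j) (k,l)) (-1:K)) (mono3 ((m,n):Pt) (i,j) (k,l)) :=
    (isLM_binom_iff hirr' htr' htot' hne0 one_ne_zero negone _).mpr (Or.inr ⟨rfl, hcase⟩)
  obtain ⟨g, hgG, mgl, hmgl, hdvd⟩ := key_step hirr' htr' htot' hred hLMsp
  obtain ⟨u, v, hint, rfl⟩ := hgG
  have hx : u.1 < v.1 := hint.1
  have hy : u.2 < v.2 := hint.2.1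
  rw [innerMinor_eq] at hmgl
  rcases mem_support_binom' hmgl.1 with rfl | rfl
  · -- the leading monomial of g is its diagonal monomial
    obtain ⟨hu, hv⟩ := mem_of_mono2_le (x := ((m,n):Pt)) (y := ((i,j):Pt)) (z := ((k,l):Pt)) hdvd
    rcases hu with rfl | rfl | rfl <;> rcases hv with rfl | rfl | rfl
    · exact absurd (show (m:ℤ) < m from hx) (by omega)
    · exact absurd (show (m:ℤ) < i from hx) (by omega)
    · -- [δ, b] : condition (2)
      right
      rw [show ((((m,n):Pt)).1, (((k,l):Pt)).2) = ((m,l) : Pt) from rfl,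
        show ((((k,l):Pt)).1, (((m,n):Pt)).2) = ((k,n) : Pt) from rfl] at hmgl
      have hne' : mono2 ((m,n):Pt) (k,l) ≠ mono2 (m,l) (k,n) :=
        mono2_ne (pt_ne (by omega)) (pt_ne (by omega))
      have hle2 := hmgl.2 (mono2 ((m,l):Pt) (k,n))
        (by rw [support_binom hne' one_ne_zero negone]; simp)
      have hlt2 : lexLt po (mono2 ((m,l):Pt) (k,n)) (mono2 ((m,n):Pt) (k,l)) := by
        rcases hle2 with he | hgood
        · exact absurd he.symm hne'
        · exact hgood
      have hres := (pair_lt_iff hirr' htr' htot' (pt_ne (by omega)) (pt_ne (by omega))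
        (pt_ne (by omega)) (pt_ne (by omega)) (pt_ne (by omega)) (pt_ne (by omega))).mp hlt2
      rcases hres with ⟨h1, h2⟩ | ⟨h1, h2⟩
      · exact Or.inl ⟨h2, h1⟩
      · exact Or.inr ⟨h2, h1⟩
    · -- [a, δ] : condition (1)
      left
      rw [show ((((i,j):Pt)).1, (((m,n):Pt)).2) = ((i,n) : Pt) from rfl,
        show ((((m,n):Pt)).1, (((i,j):Pt)).2) = ((m,j) : Pt) from rfl] at hmgl
      have hne' : mono2 ((i,j):Pt) (m,n) ≠ mono2 (i,n) (m,j) :=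
        mono2_ne (pt_ne (by omega)) (pt_ne (by omega))
      have hle2 := hmgl.2 (mono2 ((i,n):Pt) (m,j))
        (by rw [support_binom hne' one_ne_zero negone]; simp)
      have hlt2 : lexLt po (mono2 ((i,n):Pt) (m,j)) (mono2 ((i,j):Pt) (m,n)) := by
        rcases hle2 with he | hgood
        · exact absurd he.symm hne'
        · exact hgood
      have hres := (pair_lt_iff hirr' htr' htot' (pt_ne (by omega)) (pt_ne (by omega))
        (pt_ne (by omega)) (pt_ne (by omega)) (pt_ne (by omega)) (pt_ne (by omega))).mp hlt2
      rcases hres with ⟨h1, h2⟩ | ⟨h1, h2⟩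
      · exact Or.inl ⟨h2, h1⟩
      · exact Or.inr ⟨h2, h1⟩
    · exact absurd (show (i:ℤ) < i from hx) (by omega)
    · -- [a, b] : contradicts the choice of leading monomial of f₁
      exfalso
      rw [show ((((i,j):Pt)).1, (((k,l):Pt)).2) = ((i,l) : Pt) from rfl,
        show ((((k,l):Pt)).1, (((i,j):Pt)).2) = ((k,j) : Pt) from rfl] at hmgl
      rw [← innerMinor_eq] at hmgl
      exact absurd (isLM_unique hirr' htr' htot' hmgl hLM1) hne1
    · exact absurd (show (k:ℤ) < m from hx) (by omega)
    · exact absurd (show (k:ℤ) < i from hx) (by omega)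
    · exact absurd (show (k:ℤ) < k from hx) (by omega)
  · -- the leading monomial of g is its anti-diagonal monomial: impossible here
    exfalso
    obtain ⟨hu, hv⟩ := mem_of_mono2_le (x := ((m,n):Pt)) (y := ((i,j):Pt)) (z := ((k,l):Pt)) hdvd
    rcases hu with h1 | h1 | h1 <;> rcases hv with h2 | h2 | h2 <;>
      rw [Prod.mk.injEq] at h1 h2 <;> omega

end MainAux
section MainAux2
set_option linter.unusedSectionVars false
set_option maxHeartbeats 1000000
open MvPolynomial

variable {K : Type*} [Field K] {P : Finset Pt} {po : Pt → Pt → Prop}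

variable (hirr' : ∀ x : Pt, ¬ po x x)
  (htr' : ∀ x y z : Pt, po x y → po y z → po x z)
  (htot' : ∀ x y : Pt, x ≠ y → po x y ∨ po y x)

include hirr' htr' htot' in
lemma necT2 {i j k l m n : ℤ}
    (him : i < m) (hmk : m < k) (hjn : j < n) (hnl : n < l)
    (hLM2 : IsLM po (innerMinor K ((i,n):Pt) ((m,l):Pt)) (mono2 (i,l) (m,n)))
    (hcase : lexLt po (mono3 ((m,n):Pt) (i,j) (k,l)) (mono3 ((k,j):Pt) (i,n) (m,l)))
    (hred : ReducesToZero po (minorsSet K P)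
      (monomial (mono3 ((k,j):Pt) (i,n) (m,l)) (1:K) +
       monomial (mono3 ((m,n):Pt) (i,j) (k,l)) (-1:K))) :
    (((po ((k,n):Pt) (i,n) ∧ po ((i,j):Pt) (i,n)) ∨ (po ((k,n):Pt) (k,j) ∧ po ((i,j):Pt) (k,j))) ∨
     ((po ((m,j):Pt) (k,j) ∧ po ((k,l):Pt) (k,j)) ∨ (po ((m,j):Pt) (m,l) ∧ po ((k,l):Pt) (m,l)))) := by
  have negone : (-1 : K) ≠ 0 := neg_ne_zero.mpr one_ne_zero
  have hne0 : mono3 ((k,j):Pt) (i,n) (m,l) ≠ mono3 ((m,n):Pt) (i,j) (k,l) :=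
    mono3_ne (pt_ne (by omega)) (pt_ne (by omega)) (pt_ne (by omega))
  have hne2 : mono2 ((i,n):Pt) (m,l) ≠ mono2 (i,l) (m,n) :=
    mono2_ne (pt_ne (by omega)) (pt_ne (by omega))
  have hLMsp : IsLM po
      (monomial (mono3 ((k,j):Pt) (i,n) (m,l)) (1:K) +
       monomial (mono3 ((m,n):Pt) (i,j) (k,l)) (-1:K)) (mono3 ((k,j):Pt) (i,n) (m,l)) :=
    (isLM_binom_iff hirr' htr' htot' hne0 one_ne_zero negone _).mpr (Or.inl ⟨rfl, hcase⟩)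
  obtain ⟨g, hgG, mgl, hmgl, hdvd⟩ := key_step hirr' htr' htot' hred hLMsp
  obtain ⟨u, v, hint, rfl⟩ := hgG
  have hx : u.1 < v.1 := hint.1
  have hy : u.2 < v.2 := hint.2.1
  rw [innerMinor_eq] at hmgl
  rcases mem_support_binom' hmgl.1 with rfl | rfl
  · -- leading monomial of g is its diagonal monomial: only [α, β] is possible
    exfalso
    obtain ⟨hu, hv⟩ := mem_of_mono2_le (x := ((k,j):Pt)) (y := ((i,n):Pt)) (z := ((m,l):Pt)) hdvd
    rcases hu with rfl | rfl | rfl <;> rcases hv with rfl | rfl | rfl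
    · exact absurd (show (k:ℤ) < k from hx) (by omega)
    · exact absurd (show (k:ℤ) < i from hx) (by omega)
    · exact absurd (show (k:ℤ) < m from hx) (by omega)
    · exact absurd (show (n:ℤ) < j from hy) (by omega)
    · exact absurd (show (i:ℤ) < i from hx) (by omega)
    · -- [α, β] : contradicts the choice of leading monomial of f₂
      rw [show ((((i,n):Pt)).1, (((m,l):Pt)).2) = ((i,l) : Pt) from rfl,
        show ((((m,l):Pt)).1, (((i,n):Pt)).2) = ((m,n) : Pt) from rfl] at hmgl
      rw [← innerMinor_eq] at hmgl
      exact absurd (isLM_unique hirr' htr' htot' hmgl hLM2) hne2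
    · exact absurd (show (l:ℤ) < j from hy) (by omega)
    · exact absurd (show (m:ℤ) < i from hx) (by omega)
    · exact absurd (show (m:ℤ) < m from hx) (by omega)
  · -- leading monomial of g is its anti-diagonal monomial
    obtain ⟨hu, hv⟩ := mem_of_mono2_le (x := ((k,j):Pt)) (y := ((i,n):Pt)) (z := ((m,l):Pt)) hdvd
    rcases hu with h1 | h1 | h1 <;> rcases hv with h2 | h2 | h2
    · exfalso; rw [Prod.mk.injEq] at h1 h2; omega
    · exfalso; rw [Prod.mk.injEq] at h1 h2; omega
    · exfalso; rw [Prod.mk.injEq] at h1 h2; omega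
    · -- [a, r] : condition (3)
      left
      rw [Prod.mk.injEq] at h1 h2
      have hu' : u = ((i,j) : Pt) := Prod.ext_iff.mpr ⟨h1.1, h2.2⟩
      have hv' : v = ((k,n) : Pt) := Prod.ext_iff.mpr ⟨h2.1, h1.2⟩
      subst hu' hv'
      rw [show ((((i,j):Pt)).1, (((k,n):Pt)).2) = ((i,n) : Pt) from rfl,
        show ((((k,n):Pt)).1, (((i,j):Pt)).2) = ((k,j) : Pt) from rfl] at hmgl
      have hne' : mono2 ((i,j):Pt) (k,n) ≠ mono2 (i,n) (k,j) :=
        mono2_ne (pt_ne (by omega)) (pt_ne (by omega))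
      have hle2 := hmgl.2 (mono2 ((i,j):Pt) (k,n))
        (by rw [support_binom hne' one_ne_zero negone]; simp)
      have hlt2 : lexLt po (mono2 ((i,j):Pt) (k,n)) (mono2 ((i,n):Pt) (k,j)) := by
        rcases hle2 with he | hgood
        · exact absurd he hne'
        · exact hgood
      have hres := (pair_lt_iff hirr' htr' htot' (pt_ne (by omega)) (pt_ne (by omega))
        (pt_ne (by omega)) (pt_ne (by omega)) (pt_ne (by omega)) (pt_ne (by omega))).mp hlt2
      rcases hres with ⟨h1', h2'⟩ | ⟨h1', h2'⟩
      · exact Or.inl ⟨h2', h1'⟩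
      · exact Or.inr ⟨h2', h1'⟩
    · exfalso; rw [Prod.mk.injEq] at h1 h2; omega
    · exfalso; rw [Prod.mk.injEq] at h1 h2; omega
    · -- [h, b] : condition (4)
      right
      rw [Prod.mk.injEq] at h1 h2
      have hu' : u = ((m,j) : Pt) := Prod.ext_iff.mpr ⟨h1.1, h2.2⟩
      have hv' : v = ((k,l) : Pt) := Prod.ext_iff.mpr ⟨h2.1, h1.2⟩
      subst hu' hv'
      rw [show ((((m,j):Pt)).1, (((k,l):Pt)).2) = ((m,l) : Pt) from rfl,
        show ((((k,l):Pt)).1, (((m,j):Pt)).2) = ((k,j) : Pt) from rfl] at hmgl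
      have hne' : mono2 ((m,j):Pt) (k,l) ≠ mono2 (m,l) (k,j) :=
        mono2_ne (pt_ne (by omega)) (pt_ne (by omega))
      have hle2 := hmgl.2 (mono2 ((m,j):Pt) (k,l))
        (by rw [support_binom hne' one_ne_zero negone]; simp)
      have hlt2 : lexLt po (mono2 ((m,j):Pt) (k,l)) (mono2 ((m,l):Pt) (k,j)) := by
        rcases hle2 with he | hgood
        · exact absurd he hne'
        · exact hgood
      have hres := (pair_lt_iff hirr' htr' htot' (pt_ne (by omega)) (pt_ne (by omega))
        (pt_ne (by omega)) (pt_ne (by omega)) (pt_ne (by omega)) (pt_ne (by omega))).mp hlt2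
      rcases hres with ⟨h1', h2'⟩ | ⟨h1', h2'⟩
      · exact Or.inr ⟨h1', h2'⟩
      · exact Or.inl ⟨h1', h2'⟩
    · exfalso; rw [Prod.mk.injEq] at h1 h2; omega
    · exfalso; rw [Prod.mk.injEq] at h1 h2; omega

end MainAux2
section MainAux3
set_option linter.unusedSectionVars false
set_option maxHeartbeats 1000000
open MvPolynomial

variable {K : Type*} [Field K] {P : Finset Pt} {po : Pt → Pt → Prop}

variable (hirr' : ∀ x : Pt, ¬ po x x)
  (htr' : ∀ x y z : Pt, po x y → po y z → po x z)
  (htot' : ∀ x y : Pt, x ≠ y → po x y ∨ po y x)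

include hirr' htr' htot' in
lemma sufT1a {i j k l m n : ℤ}
    (him : i < m) (hmk : m < k) (hjn : j < n) (hnl : n < l)
    (hab : IsInnerInterval P ((i,j):Pt) ((k,l):Pt))
    (hcase : lexLt po (mono3 ((k,j):Pt) (i,n) (m,l)) (mono3 ((m,n):Pt) (i,j) (k,l)))
    (hcond : (po ((m,j):Pt) (i,j) ∧ po ((i,n):Pt) (i,j)) ∨
             (po ((m,j):Pt) (m,n) ∧ po ((i,n):Pt) (m,n))) :
    ReducesToZero po (minorsSet K P)
      (monomial (mono3 ((k,j):Pt) (i,n) (m,l)) (1:K) +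
       monomial (mono3 ((m,n):Pt) (i,j) (k,l)) (-1:K)) := by
  have negone : (-1 : K) ≠ 0 := neg_ne_zero.mpr one_ne_zero
  have hne0 : mono3 ((k,j):Pt) (i,n) (m,l) ≠ mono3 ((m,n):Pt) (i,j) (k,l) :=
    mono3_ne (pt_ne (by omega)) (pt_ne (by omega)) (pt_ne (by omega))
  have hLMsp : IsLM po
      (monomial (mono3 ((k,j):Pt) (i,n) (m,l)) (1:K) +
       monomial (mono3 ((m,n):Pt) (i,j) (k,l)) (-1:K)) (mono3 ((m,n):Pt) (i,j) (k,l)) :=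
    (isLM_binom_iff hirr' htr' htot' hne0 one_ne_zero negone _).mpr (Or.inr ⟨rfl, hcase⟩)
  have hg1eq : innerMinor K ((i,j):Pt) ((m,n):Pt) =
      monomial (mono2 (i,j) (m,n)) (1:K) + monomial (mono2 (i,n) (m,j)) (-1:K) :=
    innerMinor_eq _ _
  have hg2eq : innerMinor K ((m,j):Pt) ((k,l):Pt) =
      monomial (mono2 (m,j) (k,l)) (1:K) + monomial (mono2 (m,l) (k,j)) (-1:K) :=
    innerMinor_eq _ _
  have hg1G : innerMinor K ((i,j):Pt) ((m,n):Pt) ∈ minorsSet K P :=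
    ⟨(i,j), (m,n), ⟨him, hjn, fun c' h1 h2 h3 h4 => hab.2.2 c' h1
      (lt_trans (show c'.1 < m from h2) hmk) h3
      (lt_trans (show c'.2 < n from h4) hnl)⟩, rfl⟩
  have hg2G : innerMinor K ((m,j):Pt) ((k,l):Pt) ∈ minorsSet K P :=
    ⟨(m,j), (k,l), ⟨hmk, show (j:ℤ) < l by omega, fun c' h1 h2 h3 h4 => hab.2.2 c'
      (le_trans (le_of_lt him) (show (m:ℤ) ≤ c'.1 from h1)) h2 h3 h4⟩, rfl⟩
  have hneq : innerMinor K ((i,j):Pt) ((m,n):Pt) ≠ innerMinor K ((m,j):Pt) ((k,l):Pt) := by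
    intro hEq
    have hco := congrArg (coeff (mono2 ((i,j):Pt) (m,n))) hEq
    rw [hg1eq, hg2eq, coeff_binom, coeff_binom, if_pos rfl,
      if_neg (mono2_ne (pt_ne (by omega)) (pt_ne (by omega)) :
        mono2 ((i,n):Pt) (m,j) ≠ mono2 ((i,j):Pt) (m,n)),
      if_neg (mono2_ne (pt_ne (by omega)) (pt_ne (by omega)) :
        mono2 ((m,j):Pt) (k,l) ≠ mono2 ((i,j):Pt) (m,n)),
      if_neg (mono2_ne (pt_ne (by omega)) (pt_ne (by omega)) :
        mono2 ((m,l):Pt) (k,j) ≠ mono2 ((i,j):Pt) (m,n))] at hco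
    norm_num at hco
  have heq : (monomial (mono3 ((k,j):Pt) (i,n) (m,l)) (1:K) +
       monomial (mono3 ((m,n):Pt) (i,j) (k,l)) (-1:K)) =
      -(X ((k,l):Pt)) * innerMinor K ((i,j):Pt) ((m,n):Pt) +
      -(X ((i,n):Pt)) * innerMinor K ((m,j):Pt) ((k,l):Pt) := by
    rw [show (monomial (mono3 ((k,j):Pt) (i,n) (m,l)) (1:K) +
        monomial (mono3 ((m,n):Pt) (i,j) (k,l)) (-1:K)) =
        X ((k,j):Pt) * X ((i,n):Pt) * X ((m,l):Pt) -
        X ((m,n):Pt) * X ((i,j):Pt) * X ((k,l):Pt) from by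
      rw [X_mul_X_mul_X, X_mul_X_mul_X, sub_eq_add_neg, ← map_neg]]
    unfold innerMinor
    ring
  have hp1 : -(X ((k,l):Pt)) * innerMinor K ((i,j):Pt) ((m,n):Pt) =
      monomial (Finsupp.single ((k,l):Pt) 1 + mono2 (i,j) (m,n)) (-1:K) +
      monomial (Finsupp.single ((k,l):Pt) 1 + mono2 (i,n) (m,j)) (1:K) := by
    rw [hg1eq]; exact neg_X_mul_binom _ _ _
  have hp2 : -(X ((i,n):Pt)) * innerMinor K ((m,j):Pt) ((k,l):Pt) =
      monomial (Finsupp.single ((i,n):Pt) 1 + mono2 (m,j) (k,l)) (-1:K) +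
      monomial (Finsupp.single ((i,n):Pt) 1 + mono2 (m,l) (k,j)) (1:K) := by
    rw [hg2eq]; exact neg_X_mul_binom _ _ _
  have hE1 : Finsupp.single ((k,l):Pt) 1 + mono2 (i,j) (m,n)
      = mono3 ((m,n):Pt) (i,j) (k,l) := by
    simp only [mono2, mono3]; abel
  have hE2eq : mono3 ((m,n):Pt) (i,j) (k,l)
      = mono2 (i,j) (m,n) + Finsupp.single ((k,l):Pt) 1 := by
    simp only [mono2, mono3]; abel
  have hcondlt : lexLt po (mono2 ((i,n):Pt) (m,j)) (mono2 ((i,j):Pt) (m,n)) :=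
    (pair_lt_iff hirr' htr' htot' (pt_ne (by omega)) (pt_ne (by omega)) (pt_ne (by omega))
      (pt_ne (by omega)) (pt_ne (by omega)) (pt_ne (by omega))).mpr (by
        rcases hcond with ⟨h1, h2⟩ | ⟨h1, h2⟩
        · exact Or.inl ⟨h2, h1⟩
        · exact Or.inr ⟨h2, h1⟩)
  refine reducesToZero_of_two hirr' htr' htot' hg1G hg2G hneq heq hLMsp ?_ ?_
  · intro m' hm'
    rw [hp1] at hm'
    rcases mem_support_binom' hm' with rfl | rfl
    · exact Or.inl hE1
    · right
      rw [show Finsupp.single ((k,l):Pt) 1 + mono2 ((i,n):Pt) ((m,j):Pt)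
          = mono2 ((i,n):Pt) ((m,j):Pt) + Finsupp.single ((k,l):Pt) 1 from add_comm _ _,
        hE2eq]
      exact lexLt_add_right.mpr hcondlt
  · intro m' hm'
    rw [hp2] at hm'
    rcases mem_support_binom' hm' with rfl | rfl
    · right
      rw [show Finsupp.single ((i,n):Pt) 1 + mono2 ((m,j):Pt) ((k,l):Pt)
          = mono2 ((i,n):Pt) ((m,j):Pt) + Finsupp.single ((k,l):Pt) 1 from by
        simp only [mono2]; abel, hE2eq]
      exact lexLt_add_right.mpr hcondlt
    · right
      rw [show Finsupp.single ((i,n):Pt) 1 + mono2 ((m,l):Pt) ((k,j):Pt)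
          = mono3 ((k,j):Pt) (i,n) (m,l) from by simp only [mono2, mono3]; abel]
      exact hcase

include hirr' htr' htot' in
lemma sufT1b {i j k l m n : ℤ}
    (him : i < m) (hmk : m < k) (hjn : j < n) (hnl : n < l)
    (hab : IsInnerInterval P ((i,j):Pt) ((k,l):Pt))
    (hcase : lexLt po (mono3 ((k,j):Pt) (i,n) (m,l)) (mono3 ((m,n):Pt) (i,j) (k,l)))
    (hcond : (po ((k,n):Pt) (m,n) ∧ po ((m,l):Pt) (m,n)) ∨
             (po ((k,n):Pt) (k,l) ∧ po ((m,l):Pt) (k,l))) :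
    ReducesToZero po (minorsSet K P)
      (monomial (mono3 ((k,j):Pt) (i,n) (m,l)) (1:K) +
       monomial (mono3 ((m,n):Pt) (i,j) (k,l)) (-1:K)) := by
  have negone : (-1 : K) ≠ 0 := neg_ne_zero.mpr one_ne_zero
  have hne0 : mono3 ((k,j):Pt) (i,n) (m,l) ≠ mono3 ((m,n):Pt) (i,j) (k,l) :=
    mono3_ne (pt_ne (by omega)) (pt_ne (by omega)) (pt_ne (by omega))
  have hLMsp : IsLM po
      (monomial (mono3 ((k,j):Pt) (i,n) (m,l)) (1:K) +
       monomial (mono3 ((m,n):Pt) (i,j) (k,l)) (-1:K)) (mono3 ((m,n):Pt) (i,j) (k,l)) :=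
    (isLM_binom_iff hirr' htr' htot' hne0 one_ne_zero negone _).mpr (Or.inr ⟨rfl, hcase⟩)
  have hg1eq : innerMinor K ((m,n):Pt) ((k,l):Pt) =
      monomial (mono2 (m,n) (k,l)) (1:K) + monomial (mono2 (m,l) (k,n)) (-1:K) :=
    innerMinor_eq _ _
  have hg2eq : innerMinor K ((i,j):Pt) ((k,n):Pt) =
      monomial (mono2 (i,j) (k,n)) (1:K) + monomial (mono2 (i,n) (k,j)) (-1:K) :=
    innerMinor_eq _ _
  have hg1G : innerMinor K ((m,n):Pt) ((k,l):Pt) ∈ minorsSet K P :=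
    ⟨(m,n), (k,l), ⟨hmk, hnl, fun c' h1 h2 h3 h4 => hab.2.2 c'
      (le_trans (le_of_lt him) (show (m:ℤ) ≤ c'.1 from h1)) h2
      (le_trans (le_of_lt hjn) (show (n:ℤ) ≤ c'.2 from h3)) h4⟩, rfl⟩
  have hg2G : innerMinor K ((i,j):Pt) ((k,n):Pt) ∈ minorsSet K P :=
    ⟨(i,j), (k,n), ⟨show (i:ℤ) < k by omega, hjn, fun c' h1 h2 h3 h4 => hab.2.2 c' h1 h2 h3
      (lt_trans (show c'.2 < n from h4) hnl)⟩, rfl⟩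
  have hneq : innerMinor K ((m,n):Pt) ((k,l):Pt) ≠ innerMinor K ((i,j):Pt) ((k,n):Pt) := by
    intro hEq
    have hco := congrArg (coeff (mono2 ((m,n):Pt) (k,l))) hEq
    rw [hg1eq, hg2eq, coeff_binom, coeff_binom, if_pos rfl,
      if_neg (mono2_ne (pt_ne (by omega)) (pt_ne (by omega)) :
        mono2 ((m,l):Pt) (k,n) ≠ mono2 ((m,n):Pt) (k,l)),
      if_neg (mono2_ne (pt_ne (by omega)) (pt_ne (by omega)) :
        mono2 ((i,j):Pt) (k,n) ≠ mono2 ((m,n):Pt) (k,l)),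
      if_neg (mono2_ne (pt_ne (by omega)) (pt_ne (by omega)) :
        mono2 ((i,n):Pt) (k,j) ≠ mono2 ((m,n):Pt) (k,l))] at hco
    norm_num at hco
  have heq : (monomial (mono3 ((k,j):Pt) (i,n) (m,l)) (1:K) +
       monomial (mono3 ((m,n):Pt) (i,j) (k,l)) (-1:K)) =
      -(X ((i,j):Pt)) * innerMinor K ((m,n):Pt) ((k,l):Pt) +
      -(X ((m,l):Pt)) * innerMinor K ((i,j):Pt) ((k,n):Pt) := by
    rw [show (monomial (mono3 ((k,j):Pt) (i,n) (m,l)) (1:K) +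
        monomial (mono3 ((m,n):Pt) (i,j) (k,l)) (-1:K)) =
        X ((k,j):Pt) * X ((i,n):Pt) * X ((m,l):Pt) -
        X ((m,n):Pt) * X ((i,j):Pt) * X ((k,l):Pt) from by
      rw [X_mul_X_mul_X, X_mul_X_mul_X, sub_eq_add_neg, ← map_neg]]
    unfold innerMinor
    ring
  have hp1 : -(X ((i,j):Pt)) * innerMinor K ((m,n):Pt) ((k,l):Pt) =
      monomial (Finsupp.single ((i,j):Pt) 1 + mono2 (m,n) (k,l)) (-1:K) +
      monomial (Finsupp.single ((i,j):Pt) 1 + mono2 (m,l) (k,n)) (1:K) := by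
    rw [hg1eq]; exact neg_X_mul_binom _ _ _
  have hp2 : -(X ((m,l):Pt)) * innerMinor K ((i,j):Pt) ((k,n):Pt) =
      monomial (Finsupp.single ((m,l):Pt) 1 + mono2 (i,j) (k,n)) (-1:K) +
      monomial (Finsupp.single ((m,l):Pt) 1 + mono2 (i,n) (k,j)) (1:K) := by
    rw [hg2eq]; exact neg_X_mul_binom _ _ _
  have hE1 : Finsupp.single ((i,j):Pt) 1 + mono2 (m,n) (k,l)
      = mono3 ((m,n):Pt) (i,j) (k,l) := by
    simp only [mono2, mono3]; abel
  have hE2eq : mono3 ((m,n):Pt) (i,j) (k,l)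
      = mono2 (m,n) (k,l) + Finsupp.single ((i,j):Pt) 1 := by
    simp only [mono2, mono3]; abel
  have hcondlt : lexLt po (mono2 ((m,l):Pt) (k,n)) (mono2 ((m,n):Pt) (k,l)) :=
    (pair_lt_iff hirr' htr' htot' (pt_ne (by omega)) (pt_ne (by omega)) (pt_ne (by omega))
      (pt_ne (by omega)) (pt_ne (by omega)) (pt_ne (by omega))).mpr (by
        rcases hcond with ⟨h1, h2⟩ | ⟨h1, h2⟩
        · exact Or.inl ⟨h2, h1⟩
        · exact Or.inr ⟨h2, h1⟩)
  refine reducesToZero_of_two hirr' htr' htot' hg1G hg2G hneq heq hLMsp ?_ ?_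
  · intro m' hm'
    rw [hp1] at hm'
    rcases mem_support_binom' hm' with rfl | rfl
    · exact Or.inl hE1
    · right
      rw [show Finsupp.single ((i,j):Pt) 1 + mono2 ((m,l):Pt) ((k,n):Pt)
          = mono2 ((m,l):Pt) ((k,n):Pt) + Finsupp.single ((i,j):Pt) 1 from add_comm _ _,
        hE2eq]
      exact lexLt_add_right.mpr hcondlt
  · intro m' hm'
    rw [hp2] at hm'
    rcases mem_support_binom' hm' with rfl | rfl
    · right
      rw [show Finsupp.single ((m,l):Pt) 1 + mono2 ((i,j):Pt) ((k,n):Pt)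
          = mono2 ((m,l):Pt) ((k,n):Pt) + Finsupp.single ((i,j):Pt) 1 from by
        simp only [mono2]; abel, hE2eq]
      exact lexLt_add_right.mpr hcondlt
    · right
      rw [show Finsupp.single ((m,l):Pt) 1 + mono2 ((i,n):Pt) ((k,j):Pt)
          = mono3 ((k,j):Pt) (i,n) (m,l) from by simp only [mono2, mono3]; abel]
      exact hcase

include hirr' htr' htot' in
lemma sufT2a {i j k l m n : ℤ}
    (him : i < m) (hmk : m < k) (hjn : j < n) (hnl : n < l)
    (hab : IsInnerInterval P ((i,j):Pt) ((k,l):Pt))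
    (hcase : lexLt po (mono3 ((m,n):Pt) (i,j) (k,l)) (mono3 ((k,j):Pt) (i,n) (m,l)))
    (hcond : (po ((k,n):Pt) (i,n) ∧ po ((i,j):Pt) (i,n)) ∨
             (po ((k,n):Pt) (k,j) ∧ po ((i,j):Pt) (k,j))) :
    ReducesToZero po (minorsSet K P)
      (monomial (mono3 ((k,j):Pt) (i,n) (m,l)) (1:K) +
       monomial (mono3 ((m,n):Pt) (i,j) (k,l)) (-1:K)) := by
  have negone : (-1 : K) ≠ 0 := neg_ne_zero.mpr one_ne_zero
  have hne0 : mono3 ((k,j):Pt) (i,n) (m,l) ≠ mono3 ((m,n):Pt) (i,j) (k,l) :=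
    mono3_ne (pt_ne (by omega)) (pt_ne (by omega)) (pt_ne (by omega))
  have hLMsp : IsLM po
      (monomial (mono3 ((k,j):Pt) (i,n) (m,l)) (1:K) +
       monomial (mono3 ((m,n):Pt) (i,j) (k,l)) (-1:K)) (mono3 ((k,j):Pt) (i,n) (m,l)) :=
    (isLM_binom_iff hirr' htr' htot' hne0 one_ne_zero negone _).mpr (Or.inl ⟨rfl, hcase⟩)
  have hg1eq : innerMinor K ((m,n):Pt) ((k,l):Pt) =
      monomial (mono2 (m,n) (k,l)) (1:K) + monomial (mono2 (m,l) (k,n)) (-1:K) :=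
    innerMinor_eq _ _
  have hg2eq : innerMinor K ((i,j):Pt) ((k,n):Pt) =
      monomial (mono2 (i,j) (k,n)) (1:K) + monomial (mono2 (i,n) (k,j)) (-1:K) :=
    innerMinor_eq _ _
  have hg1G : innerMinor K ((m,n):Pt) ((k,l):Pt) ∈ minorsSet K P :=
    ⟨(m,n), (k,l), ⟨hmk, hnl, fun c' h1 h2 h3 h4 => hab.2.2 c'
      (le_trans (le_of_lt him) (show (m:ℤ) ≤ c'.1 from h1)) h2
      (le_trans (le_of_lt hjn) (show (n:ℤ) ≤ c'.2 from h3)) h4⟩, rfl⟩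
  have hg2G : innerMinor K ((i,j):Pt) ((k,n):Pt) ∈ minorsSet K P :=
    ⟨(i,j), (k,n), ⟨show (i:ℤ) < k by omega, hjn, fun c' h1 h2 h3 h4 => hab.2.2 c' h1 h2 h3
      (lt_trans (show c'.2 < n from h4) hnl)⟩, rfl⟩
  have hneq : innerMinor K ((m,n):Pt) ((k,l):Pt) ≠ innerMinor K ((i,j):Pt) ((k,n):Pt) := by
    intro hEq
    have hco := congrArg (coeff (mono2 ((m,n):Pt) (k,l))) hEq
    rw [hg1eq, hg2eq, coeff_binom, coeff_binom, if_pos rfl,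
      if_neg (mono2_ne (pt_ne (by omega)) (pt_ne (by omega)) :
        mono2 ((m,l):Pt) (k,n) ≠ mono2 ((m,n):Pt) (k,l)),
      if_neg (mono2_ne (pt_ne (by omega)) (pt_ne (by omega)) :
        mono2 ((i,j):Pt) (k,n) ≠ mono2 ((m,n):Pt) (k,l)),
      if_neg (mono2_ne (pt_ne (by omega)) (pt_ne (by omega)) :
        mono2 ((i,n):Pt) (k,j) ≠ mono2 ((m,n):Pt) (k,l))] at hco
    norm_num at hco
  have heq : (monomial (mono3 ((k,j):Pt) (i,n) (m,l)) (1:K) +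
       monomial (mono3 ((m,n):Pt) (i,j) (k,l)) (-1:K)) =
      -(X ((i,j):Pt)) * innerMinor K ((m,n):Pt) ((k,l):Pt) +
      -(X ((m,l):Pt)) * innerMinor K ((i,j):Pt) ((k,n):Pt) := by
    rw [show (monomial (mono3 ((k,j):Pt) (i,n) (m,l)) (1:K) +
        monomial (mono3 ((m,n):Pt) (i,j) (k,l)) (-1:K)) =
        X ((k,j):Pt) * X ((i,n):Pt) * X ((m,l):Pt) -
        X ((m,n):Pt) * X ((i,j):Pt) * X ((k,l):Pt) from by
      rw [X_mul_X_mul_X, X_mul_X_mul_X, sub_eq_add_neg, ← map_neg]]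
    unfold innerMinor
    ring
  have hp1 : -(X ((i,j):Pt)) * innerMinor K ((m,n):Pt) ((k,l):Pt) =
      monomial (Finsupp.single ((i,j):Pt) 1 + mono2 (m,n) (k,l)) (-1:K) +
      monomial (Finsupp.single ((i,j):Pt) 1 + mono2 (m,l) (k,n)) (1:K) := by
    rw [hg1eq]; exact neg_X_mul_binom _ _ _
  have hp2 : -(X ((m,l):Pt)) * innerMinor K ((i,j):Pt) ((k,n):Pt) =
      monomial (Finsupp.single ((m,l):Pt) 1 + mono2 (i,j) (k,n)) (-1:K) +
      monomial (Finsupp.single ((m,l):Pt) 1 + mono2 (i,n) (k,j)) (1:K) := by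
    rw [hg2eq]; exact neg_X_mul_binom _ _ _
  have hE1 : Finsupp.single ((m,l):Pt) 1 + mono2 (i,n) (k,j)
      = mono3 ((k,j):Pt) (i,n) (m,l) := by
    simp only [mono2, mono3]; abel
  have hE2eq : mono3 ((k,j):Pt) (i,n) (m,l)
      = mono2 (i,n) (k,j) + Finsupp.single ((m,l):Pt) 1 := by
    simp only [mono2, mono3]; abel
  have hcondlt : lexLt po (mono2 ((i,j):Pt) (k,n)) (mono2 ((i,n):Pt) (k,j)) :=
    (pair_lt_iff hirr' htr' htot' (pt_ne (by omega)) (pt_ne (by omega)) (pt_ne (by omega))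
      (pt_ne (by omega)) (pt_ne (by omega)) (pt_ne (by omega))).mpr (by
        rcases hcond with ⟨h1, h2⟩ | ⟨h1, h2⟩
        · exact Or.inl ⟨h2, h1⟩
        · exact Or.inr ⟨h2, h1⟩)
  refine reducesToZero_of_two hirr' htr' htot' hg1G hg2G hneq heq hLMsp ?_ ?_
  · intro m' hm'
    rw [hp1] at hm'
    rcases mem_support_binom' hm' with rfl | rfl
    · right
      rw [show Finsupp.single ((i,j):Pt) 1 + mono2 ((m,n):Pt) ((k,l):Pt)
          = mono3 ((m,n):Pt) (i,j) (k,l) from by simp only [mono2, mono3]; abel]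
      exact hcase
    · right
      rw [show Finsupp.single ((i,j):Pt) 1 + mono2 ((m,l):Pt) ((k,n):Pt)
          = mono2 ((i,j):Pt) ((k,n):Pt) + Finsupp.single ((m,l):Pt) 1 from by
        simp only [mono2]; abel, hE2eq]
      exact lexLt_add_right.mpr hcondlt
  · intro m' hm'
    rw [hp2] at hm'
    rcases mem_support_binom' hm' with rfl | rfl
    · right
      rw [show Finsupp.single ((m,l):Pt) 1 + mono2 ((i,j):Pt) ((k,n):Pt)
          = mono2 ((i,j):Pt) ((k,n):Pt) + Finsupp.single ((m,l):Pt) 1 from add_comm _ _,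
        hE2eq]
      exact lexLt_add_right.mpr hcondlt
    · exact Or.inl hE1

include hirr' htr' htot' in
lemma sufT2b {i j k l m n : ℤ}
    (him : i < m) (hmk : m < k) (hjn : j < n) (hnl : n < l)
    (hab : IsInnerInterval P ((i,j):Pt) ((k,l):Pt))
    (hcase : lexLt po (mono3 ((m,n):Pt) (i,j) (k,l)) (mono3 ((k,j):Pt) (i,n) (m,l)))
    (hcond : (po ((m,j):Pt) (k,j) ∧ po ((k,l):Pt) (k,j)) ∨
             (po ((m,j):Pt) (m,l) ∧ po ((k,l):Pt) (m,l))) :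
    ReducesToZero po (minorsSet K P)
      (monomial (mono3 ((k,j):Pt) (i,n) (m,l)) (1:K) +
       monomial (mono3 ((m,n):Pt) (i,j) (k,l)) (-1:K)) := by
  have negone : (-1 : K) ≠ 0 := neg_ne_zero.mpr one_ne_zero
  have hne0 : mono3 ((k,j):Pt) (i,n) (m,l) ≠ mono3 ((m,n):Pt) (i,j) (k,l) :=
    mono3_ne (pt_ne (by omega)) (pt_ne (by omega)) (pt_ne (by omega))
  have hLMsp : IsLM po
      (monomial (mono3 ((k,j):Pt) (i,n) (m,l)) (1:K) +
       monomial (mono3 ((m,n):Pt) (i,j) (k,l)) (-1:K)) (mono3 ((k,j):Pt) (i,n) (m,l)) :=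
    (isLM_binom_iff hirr' htr' htot' hne0 one_ne_zero negone _).mpr (Or.inl ⟨rfl, hcase⟩)
  have hg1eq : innerMinor K ((i,j):Pt) ((m,n):Pt) =
      monomial (mono2 (i,j) (m,n)) (1:K) + monomial (mono2 (i,n) (m,j)) (-1:K) :=
    innerMinor_eq _ _
  have hg2eq : innerMinor K ((m,j):Pt) ((k,l):Pt) =
      monomial (mono2 (m,j) (k,l)) (1:K) + monomial (mono2 (m,l) (k,j)) (-1:K) :=
    innerMinor_eq _ _
  have hg1G : innerMinor K ((i,j):Pt) ((m,n):Pt) ∈ minorsSet K P :=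
    ⟨(i,j), (m,n), ⟨him, hjn, fun c' h1 h2 h3 h4 => hab.2.2 c' h1
      (lt_trans (show c'.1 < m from h2) hmk) h3
      (lt_trans (show c'.2 < n from h4) hnl)⟩, rfl⟩
  have hg2G : innerMinor K ((m,j):Pt) ((k,l):Pt) ∈ minorsSet K P :=
    ⟨(m,j), (k,l), ⟨hmk, show (j:ℤ) < l by omega, fun c' h1 h2 h3 h4 => hab.2.2 c'
      (le_trans (le_of_lt him) (show (m:ℤ) ≤ c'.1 from h1)) h2 h3 h4⟩, rfl⟩
  have hneq : innerMinor K ((i,j):Pt) ((m,n):Pt) ≠ innerMinor K ((m,j):Pt) ((k,l):Pt) := by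
    intro hEq
    have hco := congrArg (coeff (mono2 ((i,j):Pt) (m,n))) hEq
    rw [hg1eq, hg2eq, coeff_binom, coeff_binom, if_pos rfl,
      if_neg (mono2_ne (pt_ne (by omega)) (pt_ne (by omega)) :
        mono2 ((i,n):Pt) (m,j) ≠ mono2 ((i,j):Pt) (m,n)),
      if_neg (mono2_ne (pt_ne (by omega)) (pt_ne (by omega)) :
        mono2 ((m,j):Pt) (k,l) ≠ mono2 ((i,j):Pt) (m,n)),
      if_neg (mono2_ne (pt_ne (by omega)) (pt_ne (by omega)) :
        mono2 ((m,l):Pt) (k,j) ≠ mono2 ((i,j):Pt) (m,n))] at hco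
    norm_num at hco
  have heq : (monomial (mono3 ((k,j):Pt) (i,n) (m,l)) (1:K) +
       monomial (mono3 ((m,n):Pt) (i,j) (k,l)) (-1:K)) =
      -(X ((k,l):Pt)) * innerMinor K ((i,j):Pt) ((m,n):Pt) +
      -(X ((i,n):Pt)) * innerMinor K ((m,j):Pt) ((k,l):Pt) := by
    rw [show (monomial (mono3 ((k,j):Pt) (i,n) (m,l)) (1:K) +
        monomial (mono3 ((m,n):Pt) (i,j) (k,l)) (-1:K)) =
        X ((k,j):Pt) * X ((i,n):Pt) * X ((m,l):Pt) -
        X ((m,n):Pt) * X ((i,j):Pt) * X ((k,l):Pt) from by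
      rw [X_mul_X_mul_X, X_mul_X_mul_X, sub_eq_add_neg, ← map_neg]]
    unfold innerMinor
    ring
  have hp1 : -(X ((k,l):Pt)) * innerMinor K ((i,j):Pt) ((m,n):Pt) =
      monomial (Finsupp.single ((k,l):Pt) 1 + mono2 (i,j) (m,n)) (-1:K) +
      monomial (Finsupp.single ((k,l):Pt) 1 + mono2 (i,n) (m,j)) (1:K) := by
    rw [hg1eq]; exact neg_X_mul_binom _ _ _
  have hp2 : -(X ((i,n):Pt)) * innerMinor K ((m,j):Pt) ((k,l):Pt) =
      monomial (Finsupp.single ((i,n):Pt) 1 + mono2 (m,j) (k,l)) (-1:K) +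
      monomial (Finsupp.single ((i,n):Pt) 1 + mono2 (m,l) (k,j)) (1:K) := by
    rw [hg2eq]; exact neg_X_mul_binom _ _ _
  have hE1 : Finsupp.single ((i,n):Pt) 1 + mono2 (m,l) (k,j)
      = mono3 ((k,j):Pt) (i,n) (m,l) := by
    simp only [mono2, mono3]; abel
  have hE2eq : mono3 ((k,j):Pt) (i,n) (m,l)
      = mono2 (m,l) (k,j) + Finsupp.single ((i,n):Pt) 1 := by
    simp only [mono2, mono3]; abel
  have hcondlt : lexLt po (mono2 ((m,j):Pt) (k,l)) (mono2 ((m,l):Pt) (k,j)) :=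
    (pair_lt_iff hirr' htr' htot' (pt_ne (by omega)) (pt_ne (by omega)) (pt_ne (by omega))
      (pt_ne (by omega)) (pt_ne (by omega)) (pt_ne (by omega))).mpr (by
        rcases hcond with ⟨h1, h2⟩ | ⟨h1, h2⟩
        · exact Or.inr ⟨h1, h2⟩
        · exact Or.inl ⟨h1, h2⟩)
  refine reducesToZero_of_two hirr' htr' htot' hg1G hg2G hneq heq hLMsp ?_ ?_
  · intro m' hm'
    rw [hp1] at hm'
    rcases mem_support_binom' hm' with rfl | rfl
    · right
      rw [show Finsupp.single ((k,l):Pt) 1 + mono2 ((i,j):Pt) ((m,n):Pt)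
          = mono3 ((m,n):Pt) (i,j) (k,l) from by simp only [mono2, mono3]; abel]
      exact hcase
    · right
      rw [show Finsupp.single ((k,l):Pt) 1 + mono2 ((i,n):Pt) ((m,j):Pt)
          = mono2 ((m,j):Pt) ((k,l):Pt) + Finsupp.single ((i,n):Pt) 1 from by
        simp only [mono2]; abel, hE2eq]
      exact lexLt_add_right.mpr hcondlt
  · intro m' hm'
    rw [hp2] at hm'
    rcases mem_support_binom' hm' with rfl | rfl
    · right
      rw [show Finsupp.single ((i,n):Pt) 1 + mono2 ((m,j):Pt) ((k,l):Pt)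
          = mono2 ((m,j):Pt) ((k,l):Pt) + Finsupp.single ((i,n):Pt) 1 from add_comm _ _,
        hE2eq]
      exact lexLt_add_right.mpr hcondlt
    · exact Or.inl hE1

end MainAux3
set_option linter.unusedSectionVars false in
set_option maxHeartbeats 1000000 in
theorem sPoly_reducesToZero_iff_case4
    (K : Type*) [Field K] (P : Finset Pt) (hP : P.Nonempty)
    (i j k l m n : ℤ)
    (a b c d α β γ δ h r : Pt)
    (ha : a = (i, j)) (hb : b = (k, l)) (hc : c = (i, l)) (hd : d = (k, j))
    (hα : α = (i, n)) (hβ : β = (m, l)) (hγ : γ = c) (hδ : δ = (m, n))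
    (hh : h = (m, j)) (hr : r = (k, n))
    (him : i < m) (hmk : m < k) (hjn : j < n) (hnl : n < l)
    (hab : IsInnerInterval P a b) (hαβ : IsInnerInterval P α β)
    (po : Pt → Pt → Prop) (hpo : IsStrictTotalOrder Pt po)
    (hgcd : ∃ mf mg : Pt →₀ ℕ, IsLM po (innerMinor K a b) mf ∧
      IsLM po (innerMinor K α β) mg ∧ ∃ w, 0 < mf w ∧ 0 < mg w) :
    (∀ sp, IsSPoly po (innerMinor K a b) (innerMinor K α β) sp →
        ReducesToZero po (minorsSet K P) sp) ↔
      ((lexLt po (mono3 d α β) (mono3 δ a b) ∧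
          ((po h a ∧ po α a) ∨ (po h δ ∧ po α δ))) ∨
       (lexLt po (mono3 d α β) (mono3 δ a b) ∧
          ((po r δ ∧ po β δ) ∨ (po r b ∧ po β b))) ∨
       (lexLt po (mono3 δ a b) (mono3 d α β) ∧
          ((po r α ∧ po a α) ∨ (po r d ∧ po a d))) ∨
       (lexLt po (mono3 δ a b) (mono3 d α β) ∧
          ((po h d ∧ po b d) ∨ (po h β ∧ po b β)))) := by
  classical
  have hirr' : ∀ x : Pt, ¬ po x x := fun x => hpo.toIsStrictOrder.toIrrefl.irrefl x
  have htr' : ∀ x y z : Pt, po x y → po y z → po x z :=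
    fun x y z hxy hyz => hpo.toIsStrictOrder.toIsTrans.trans x y z hxy hyz
  have htot' : ∀ x y : Pt, x ≠ y → po x y ∨ po y x := by
    intro x y hxy
    rcases @trichotomous_of _ po hpo.toTrichotomous x y with h | h | h
    · exact Or.inl h
    · exact absurd h hxy
    · exact Or.inr h
  subst ha hb hc hd hα hβ hδ hh hr hγ
  have negone : (-1 : K) ≠ 0 := neg_ne_zero.mpr one_ne_zero
  -- the two minors as binomials
  have hf1 : innerMinor K ((i,j) : Pt) ((k,l) : Pt) =
      MvPolynomial.monomial (mono2 (i,j) (k,l)) (1 : K) +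
      MvPolynomial.monomial (mono2 (i,l) (k,j)) (-1 : K) := innerMinor_eq _ _
  have hf2 : innerMinor K ((i,n) : Pt) ((m,l) : Pt) =
      MvPolynomial.monomial (mono2 (i,n) (m,l)) (1 : K) +
      MvPolynomial.monomial (mono2 (i,l) (m,n)) (-1 : K) := innerMinor_eq _ _
  have hne1 : mono2 ((i,j):Pt) (k,l) ≠ mono2 (i,l) (k,j) :=
    mono2_ne (pt_ne (by omega)) (pt_ne (by omega))
  have hne2 : mono2 ((i,n):Pt) (m,l) ≠ mono2 (i,l) (m,n) :=
    mono2_ne (pt_ne (by omega)) (pt_ne (by omega))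
  -- identify the leading monomials from the gcd hypothesis
  obtain ⟨mf, mg, hmf, hmg, w, hwf, hwg⟩ := hgcd
  rw [hf1] at hmf
  rw [hf2] at hmg
  have hmf' := (isLM_binom_iff hirr' htr' htot' hne1 one_ne_zero negone mf).mp hmf
  have hmg' := (isLM_binom_iff hirr' htr' htot' hne2 one_ne_zero negone mg).mp hmg
  have hbad : ∀ w' : Pt,
      (w' = ((i,j):Pt) ∨ w' = ((k,l):Pt)) →
      ((w' = ((i,n):Pt) ∨ w' = ((m,l):Pt)) ∨ (w' = ((i,l):Pt) ∨ w' = ((m,n):Pt))) → False := by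
    rintro w' (rfl | rfl) ((h2 | h2) | (h2 | h2)) <;> exact absurd h2 (pt_ne (by omega))
  have hltf : lexLt po (mono2 ((i,j):Pt) (k,l)) (mono2 (i,l) (k,j)) := by
    rcases hmf' with ⟨hmfe, hltf⟩ | ⟨hmfe, hltf⟩
    · exfalso
      rw [hmfe] at hwf
      refine hbad w (mono2_pos hwf) ?_
      rcases hmg' with ⟨hmge, -⟩ | ⟨hmge, -⟩ <;> rw [hmge] at hwg
      · exact Or.inl (mono2_pos hwg)
      · exact Or.inr (mono2_pos hwg)
    · exact hltf
  have hltg : lexLt po (mono2 ((i,n):Pt) (m,l)) (mono2 (i,l) (m,n)) := by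
    rcases hmg' with ⟨hmge, hltg⟩ | ⟨hmge, hltg⟩
    · exfalso
      rcases hmf' with ⟨hmfe, -⟩ | ⟨hmfe, -⟩ <;> rw [hmfe] at hwf <;>
        rw [hmge] at hwg
      · exact hbad w (mono2_pos hwf) (Or.inl (mono2_pos hwg))
      · -- w ∈ {c, d} and w ∈ {α, β}: contradiction
        rcases mono2_pos hwf with rfl | rfl <;>
          rcases mono2_pos hwg with h2 | h2 <;> exact absurd h2 (pt_ne (by omega))
    · exact hltg
  have hLM1 : IsLM po (innerMinor K ((i,j):Pt) ((k,l):Pt)) (mono2 (i,l) (k,j)) := by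
    rw [hf1]
    exact (isLM_binom_iff hirr' htr' htot' hne1 one_ne_zero negone _).mpr
      (Or.inr ⟨rfl, hltf⟩)
  have hLM2 : IsLM po (innerMinor K ((i,n):Pt) ((m,l):Pt)) (mono2 (i,l) (m,n)) := by
    rw [hf2]
    exact (isLM_binom_iff hirr' htr' htot' hne2 one_ne_zero negone _).mpr
      (Or.inr ⟨rfl, hltg⟩)
  -- the S-polynomial
  have hsup : mono2 ((i,l):Pt) (k,j) ⊔ mono2 ((i,l):Pt) (m,n) = mono3 (i,l) (k,j) (m,n) :=
    sup_mono2_mono2 (pt_ne (by omega)) (pt_ne (by omega)) (pt_ne (by omega))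
  have hsub1 : mono3 ((i,l):Pt) (k,j) (m,n) - mono2 (i,l) (k,j)
      = Finsupp.single ((m,n) : Pt) 1 := by
    rw [mono3_eq]; exact add_tsub_cancel_left _ _
  have hsub2 : mono3 ((i,l):Pt) (k,j) (m,n) - mono2 (i,l) (m,n)
      = Finsupp.single ((k,j) : Pt) 1 := by
    rw [mono3_eq']; exact add_tsub_cancel_left _ _
  have hc1 : (innerMinor K ((i,j):Pt) ((k,l):Pt)).coeff (mono2 (i,l) (k,j)) = -1 := by
    rw [hf1, coeff_binom, if_neg hne1, if_pos rfl]
    norm_num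
  have hc2 : (innerMinor K ((i,n):Pt) ((m,l):Pt)).coeff (mono2 (i,l) (m,n)) = -1 := by
    rw [hf2, coeff_binom, if_neg hne2, if_pos rfl]
    norm_num
  have hsp0X : (MvPolynomial.monomial (mono3 ((k,j):Pt) (i,n) (m,l)) (1:K) +
      MvPolynomial.monomial (mono3 ((m,n):Pt) (i,j) (k,l)) (-1:K)) = MvPolynomial.X ((k,j):Pt) * MvPolynomial.X (i,n) * MvPolynomial.X (m,l)
      - MvPolynomial.X ((m,n):Pt) * MvPolynomial.X (i,j) * MvPolynomial.X (k,l) := by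
    rw [X_mul_X_mul_X, X_mul_X_mul_X, sub_eq_add_neg, ← map_neg]
  have hkey : (MvPolynomial.monomial (mono3 ((k,j):Pt) (i,n) (m,l)) (1:K) +
      MvPolynomial.monomial (mono3 ((m,n):Pt) (i,j) (k,l)) (-1:K)) =
      MvPolynomial.monomial ((mono2 ((i,l):Pt) (k,j) ⊔ mono2 ((i,l):Pt) (m,n)) - mono2 (i,l) (k,j))
        ((innerMinor K ((i,j):Pt) ((k,l):Pt)).coeff (mono2 (i,l) (k,j)))⁻¹ *
        innerMinor K ((i,j):Pt) ((k,l):Pt)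
      - MvPolynomial.monomial ((mono2 ((i,l):Pt) (k,j) ⊔ mono2 ((i,l):Pt) (m,n)) - mono2 (i,l) (m,n))
        ((innerMinor K ((i,n):Pt) ((m,l):Pt)).coeff (mono2 (i,l) (m,n)))⁻¹ *
        innerMinor K ((i,n):Pt) ((m,l):Pt) := by
    rw [hsup, hsub1, hsub2, hc1, hc2, hsp0X]
    rw [show ((-1:K)⁻¹ = -1) from by norm_num]
    rw [show (MvPolynomial.monomial (Finsupp.single ((m,n):Pt) 1) (-1:K))
        = -MvPolynomial.X ((m,n):Pt) from
        map_neg (MvPolynomial.monomial (Finsupp.single ((m,n):Pt) 1)) (1:K)]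
    rw [show (MvPolynomial.monomial (Finsupp.single ((k,j):Pt) 1) (-1:K))
        = -MvPolynomial.X ((k,j):Pt) from
        map_neg (MvPolynomial.monomial (Finsupp.single ((k,j):Pt) 1)) (1:K)]
    unfold innerMinor
    ring
  have hSPval : ∀ sp, IsSPoly po (innerMinor K ((i,j):Pt) ((k,l):Pt))
      (innerMinor K ((i,n):Pt) ((m,l):Pt)) sp ↔
      sp = (MvPolynomial.monomial (mono3 ((k,j):Pt) (i,n) (m,l)) (1:K) +
        MvPolynomial.monomial (mono3 ((m,n):Pt) (i,j) (k,l)) (-1:K)) := by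
    intro sp
    constructor
    · rintro ⟨mf', mg', hmf', hmg', heq⟩
      rw [isLM_unique hirr' htr' htot' hmf' hLM1,
        isLM_unique hirr' htr' htot' hmg' hLM2] at heq
      rw [heq, hkey]
    · rintro rfl
      exact ⟨mono2 (i,l) (k,j), mono2 (i,l) (m,n), hLM1, hLM2, hkey⟩
  have hne0 : mono3 ((k,j):Pt) (i,n) (m,l) ≠ mono3 ((m,n):Pt) (i,j) (k,l) :=
    mono3_ne (pt_ne (by omega)) (pt_ne (by omega)) (pt_ne (by omega))
  constructor
  · intro hall
    have hred := hall _ ((hSPval _).mpr rfl)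
    rcases lexLt_total hirr' htr' htot' hne0 with hcase | hcase
    · rcases necT1 hirr' htr' htot' him hmk hjn hnl hLM1 hcase hred with hcnd | hcnd
      · exact Or.inl ⟨hcase, hcnd⟩
      · exact Or.inr (Or.inl ⟨hcase, hcnd⟩)
    · rcases necT2 hirr' htr' htot' him hmk hjn hnl hLM2 hcase hred with hcnd | hcnd
      · exact Or.inr (Or.inr (Or.inl ⟨hcase, hcnd⟩))
      · exact Or.inr (Or.inr (Or.inr ⟨hcase, hcnd⟩))
  · intro hrhs sp hsp
    rw [(hSPval sp).mp hsp]
    rcases hrhs with ⟨hcase, hcnd⟩ | ⟨hcase, hcnd⟩ | ⟨hcase, hcnd⟩ | ⟨hcase, hcnd⟩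
    · exact sufT1a hirr' htr' htot' him hmk hjn hnl hab hcase hcnd
    · exact sufT1b hirr' htr' htot' him hmk hjn hnl hab hcase hcnd
    · exact sufT2a hirr' htr' htot' him hmk hjn hnl hab hcase hcnd
    · exact sufT2b hirr' htr' htot' him hmk hjn hnl hab hcase hcnd
end ClosedPathPaper
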